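/- arXiv:2106.13331 — 3 statements merged into one kernel-verified Lean document; each statement's English description precedes it below -/
import Mathlib

section
/- Let (ϑ₁,…,ϑ_N) ∈ (0,1)^N and let q ∈ [0, ∑_{l=1}^N 1/ϑ_l). Let τ ∈ {1,…,N} be the unique integer with ∑_{l=1}^{τ−1} 1/ϑ_l ≤ q < ∑_{l=1}^τ 1/ϑ_l (with the convention that the empty sum equals 0). Then there exists Δ_τ ∈ (0,1], depending only on (ϑ₁,…,ϑ_N), such that for every Δ ∈ (0,Δ_τ) there exist real numbers p₁,…,p_τ ≥ 1 satisfying: (i) ∑_{l=1}^τ 1/p_l = 1; (ii) ϑ_l·q/p_l < 1 for all l = 1,…,τ; (iii) (1−Δ)·∑_{l=1}^τ ϑ_l·q/p_l ≤ ϑ_τ·q + τ − ∑_{l=1}^τ ϑ_τ/ϑ_l; and moreover, setting α_τ := ∑_{l=1}^τ 1/ϑ_l − q, for every κ ∈ (0, α_τ/(2τ)) there exists l₀ ∈ {1,…,τ} such that ϑ_{l₀}·(q/p_{l₀} + 2κ) < 1. -/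
/-!
For `l < τ` take `p l = ϑ l q / (1 - ε)`, so that `ϑ l q / p l = 1 - ε` sits just below `1`; this
exponent is `≥ 1` because `1 / ϑ l ≤ ∑_{j<τ} 1 / ϑ j ≤ q`. The last exponent `p τ` takes up the rest
of the budget `∑ 1 / p l = 1`, which gives `ϑ τ q / p τ = 1 - ϑ τ (α - ε S)` with
`S = ∑_{l<τ} 1 / ϑ l` and `α = ∑_{l≤τ} 1 / ϑ l - q > 0`. Hence all ratios are `< 1` as soon as
`ε S < α`, and `∑ ϑ l q / p l` exceeds the right-hand side of (iii) by at most `ε S`, which the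
factor `1 - Δ` absorbs once `ε S ≤ (τ - 1) Δ`. Requiring also `ε S ≤ (τ - 1) α / τ` leaves room
`2 κ < α / τ` at `l₀ = τ`, so `Δ_τ = 1` works.
-/

open Finset

lemma exists_pos_lt_one_mul_sum_le {ι : Type*} (s : Finset ι) {f : ι → ℝ} (hf : ∀ i ∈ s, 0 ≤ f i)
    {b : ℝ} (hb : 0 < b) : ∃ ε, 0 < ε ∧ ε < 1 ∧ ε * ∑ i ∈ s, f i ≤ #s * b := by
  rcases s.eq_empty_or_nonempty with rfl | hs
  · exact ⟨1 / 2, by norm_num, by norm_num, by simp⟩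
  have hS : 0 ≤ ∑ i ∈ s, f i := sum_nonneg hf
  refine ⟨min (1 / 2) (b / (∑ i ∈ s, f i + 1)), lt_min (by norm_num) (by positivity),
    (min_le_left _ _).trans_lt (by norm_num), ?_⟩
  calc min (1 / 2) (b / (∑ i ∈ s, f i + 1)) * ∑ i ∈ s, f i
      ≤ b / (∑ i ∈ s, f i + 1) * (∑ i ∈ s, f i + 1) := by
        gcongr; exacts [min_le_right _ _, by linarith]
    _ = 1 * b := by field_simp
    _ ≤ #s * b := by gcongr; exact_mod_cast hs.card_pos

lemma card_mul_div_card_insert_add {ι : Type*} [DecidableEq ι] {s : Finset ι} {t : ι} (ht : t ∉ s)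
    (a : ℝ) : #s * (a / #(insert t s)) + a / #(insert t s) = a := by
  rw [card_insert_of_notMem ht]; push_cast; field_simp

lemma sum_one_div_nonneg {ι : Type*} {ϑ : ι → ℝ} {s : Finset ι} (hpos : ∀ l ∈ s, 0 < ϑ l) :
    0 ≤ ∑ l ∈ s, 1 / ϑ l :=
  sum_nonneg fun l hl => (one_div_pos.2 (hpos l hl)).le

lemma one_le_mul_of_one_div_sum_le {ι : Type*} {ϑ : ι → ℝ} {q : ℝ} {s : Finset ι}
    (hpos : ∀ l ∈ s, 0 < ϑ l) (hlow : ∑ l ∈ s, 1 / ϑ l ≤ q) {l : ι} (hl : l ∈ s) :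
    1 ≤ ϑ l * q := by
  have := (single_le_sum (fun j hj => (one_div_pos.2 (hpos j hj)).le) hl).trans hlow
  rwa [div_le_iff₀ (hpos l hl), mul_comm] at this

section HolderExponents

variable {ι : Type*} [DecidableEq ι] {ϑ : ι → ℝ} {q : ℝ} {s : Finset ι} {t : ι} {ε : ℝ}

variable (ϑ q s t ε) in
/-- `s` stands for the indices `1, …, τ - 1` and `t` for `τ`. -/
noncomputable def holderExponents : ι → ℝ :=
  fun l => if l = t then (1 - (1 - ε) * (∑ j ∈ s, 1 / ϑ j) / q)⁻¹ else ϑ l * q / (1 - ε)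

lemma holderExponents_of_ne {l : ι} (hl : l ≠ t) :
    holderExponents ϑ q s t ε l = ϑ l * q / (1 - ε) := if_neg hl

lemma holderExponents_self :
    holderExponents ϑ q s t ε t = (1 - (1 - ε) * (∑ j ∈ s, 1 / ϑ j) / q)⁻¹ := if_pos rfl

lemma sum_one_div_holderExponents (ht : t ∉ s) :
    ∑ l ∈ insert t s, 1 / holderExponents ϑ q s t ε l = 1 := by
  have hs : ∀ l ∈ s, 1 / holderExponents ϑ q s t ε l = (1 - ε) * (1 / ϑ l) / q := fun l hl => by
    rw [holderExponents_of_ne (ne_of_mem_of_not_mem hl ht), one_div_div]; ring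
  rw [sum_insert ht, sum_congr rfl hs, ← sum_div, ← mul_sum, holderExponents_self, one_div, inv_inv,
    sub_add_cancel]

lemma div_holderExponents_of_mem {l : ι} (hl : l ∈ s) (ht : t ∉ s) (hϑq : ϑ l * q ≠ 0) :
    ϑ l * q / holderExponents ϑ q s t ε l = 1 - ε := by
  rw [holderExponents_of_ne (ne_of_mem_of_not_mem hl ht), div_div_cancel₀ hϑq]

lemma div_holderExponents_self (hpos : ∀ l ∈ s, 0 < ϑ l) (hlow : ∑ l ∈ s, 1 / ϑ l ≤ q) :
    ϑ t * q / holderExponents ϑ q s t ε t =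
      ϑ t * (q - ∑ l ∈ s, 1 / ϑ l + ε * ∑ l ∈ s, 1 / ϑ l) := by
  have hS := sum_one_div_nonneg hpos
  rw [holderExponents_self, div_inv_eq_mul]
  rcases eq_or_ne q 0 with hq | hq
  · rw [hq, le_antisymm (hq ▸ hlow) hS]; simp
  · field_simp; ring

lemma one_le_holderExponents (hpos : ∀ l ∈ s, 0 < ϑ l) (hlow : ∑ l ∈ s, 1 / ϑ l ≤ q)
    (hε0 : 0 < ε) (hε1 : ε < 1) : ∀ l ∈ insert t s, 1 ≤ holderExponents ϑ q s t ε l := by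
  intro l hl
  by_cases hlt : l = t
  · have hS := sum_one_div_nonneg hpos
    have hσ0 : 0 ≤ (∑ j ∈ s, 1 / ϑ j) / q := div_nonneg hS (hS.trans hlow)
    have hσ1 : (∑ j ∈ s, 1 / ϑ j) / q ≤ 1 := div_le_one_of_le₀ hlow (hS.trans hlow)
    rw [hlt, holderExponents_self, mul_div_assoc, one_le_inv₀ (by nlinarith)]
    nlinarith
  · rw [holderExponents_of_ne hlt, one_le_div₀ (by linarith)]
    linarith [one_le_mul_of_one_div_sum_le hpos hlow ((mem_insert.1 hl).resolve_left hlt)]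

lemma mul_div_holderExponents_self_add_lt_one (ht : t ∉ s) (hpos : ∀ l ∈ s, 0 < ϑ l)
    (hlow : ∑ l ∈ s, 1 / ϑ l ≤ q) (hθ : 0 < ϑ t)
    (hε : ε * ∑ l ∈ s, 1 / ϑ l ≤ #s * ((∑ l ∈ insert t s, 1 / ϑ l - q) / #(insert t s)))
    {κ : ℝ} (hκ : κ < (∑ l ∈ insert t s, 1 / ϑ l - q) / (2 * #(insert t s))) :
    ϑ t * (q / holderExponents ϑ q s t ε t + 2 * κ) < 1 := by
  have hparts := card_mul_div_card_insert_add ht (∑ l ∈ insert t s, 1 / ϑ l - q)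
  have hsplit := sum_insert ht (f := fun l => 1 / ϑ l)
  rw [mul_comm 2, ← div_div] at hκ
  rw [mul_add, ← mul_div_assoc, div_holderExponents_self hpos hlow, ← mul_add]
  exact (lt_div_iff₀' hθ).1 (by linarith)

lemma div_holderExponents_lt_one (ht : t ∉ s) (hpos : ∀ l ∈ s, 0 < ϑ l)
    (hlow : ∑ l ∈ s, 1 / ϑ l ≤ q) (hhigh : q < ∑ l ∈ insert t s, 1 / ϑ l) (hθ : 0 < ϑ t)
    (hε0 : 0 < ε)
    (hε : ε * ∑ l ∈ s, 1 / ϑ l ≤ #s * ((∑ l ∈ insert t s, 1 / ϑ l - q) / #(insert t s))) :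
    ∀ l ∈ insert t s, ϑ l * q / holderExponents ϑ q s t ε l < 1 := by
  intro l hl
  rcases mem_insert.1 hl with rfl | hl
  · have hκ : (0 : ℝ) < (∑ l ∈ insert l s, 1 / ϑ l - q) / (2 * #(insert l s)) :=
      div_pos (by linarith) (mul_pos two_pos (Nat.cast_pos.2 (insert_nonempty _ _).card_pos))
    simpa [mul_div_assoc] using mul_div_holderExponents_self_add_lt_one ht hpos hlow hθ hε hκ
  · rw [div_holderExponents_of_mem hl ht (zero_lt_one.trans_le
      (one_le_mul_of_one_div_sum_le hpos hlow hl)).ne']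
    linarith

lemma one_sub_mul_sum_div_holderExponents_le (ht : t ∉ s) (hpos : ∀ l ∈ s, 0 < ϑ l)
    (hlow : ∑ l ∈ s, 1 / ϑ l ≤ q) (hθ0 : 0 < ϑ t) (hθ1 : ϑ t < 1) {Δ : ℝ} (hΔ0 : 0 ≤ Δ)
    (hΔ1 : Δ ≤ 1) (hε0 : 0 < ε) (hε : ε * ∑ l ∈ s, 1 / ϑ l ≤ #s * Δ) :
    (1 - Δ) * ∑ l ∈ insert t s, ϑ l * q / holderExponents ϑ q s t ε l ≤
      ϑ t * q + #(insert t s) - ∑ l ∈ insert t s, ϑ t / ϑ l := by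
  have hs : ∀ l ∈ s, ϑ l * q / holderExponents ϑ q s t ε l = 1 - ε := fun l hl =>
    div_holderExponents_of_mem hl ht
      (zero_lt_one.trans_le (one_le_mul_of_one_div_sum_le hpos hlow hl)).ne'
  have hθS : ∑ l ∈ s, ϑ t / ϑ l = ϑ t * ∑ l ∈ s, 1 / ϑ l := by
    rw [mul_sum]; simp only [mul_one_div]
  rw [sum_insert ht, sum_insert ht, div_holderExponents_self hpos hlow, sum_congr rfl hs, hθS,
    sum_const, nsmul_eq_mul, card_insert_of_notMem ht, div_self hθ0.ne']
  push_cast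
  set S := ∑ l ∈ s, 1 / ϑ l
  have hεS : 0 ≤ ε * S := mul_nonneg hε0.le (sum_one_div_nonneg hpos)
  -- the excess `ε * (ϑ t * S - #s)` over the right-hand side is absorbed by `Δ * #s ≥ ε * S`
  have hθεS : (1 - Δ) * (ϑ t * (ε * S)) ≤ ε * S := by
    nlinarith [mul_le_one₀ (sub_le_self 1 hΔ0) hθ0.le hθ1.le]
  nlinarith [mul_nonneg hΔ0 (mul_nonneg hθ0.le (sub_nonneg.2 hlow)),
    mul_nonneg (sub_nonneg.2 hΔ1) (mul_nonneg (Nat.cast_nonneg #s) hε0.le)]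

end HolderExponents

theorem holder_exponents_exist_general (N : ℕ) (ϑ : ℕ → ℝ)
    (hϑ : ∀ l ∈ Finset.Icc 1 N, 0 < ϑ l ∧ ϑ l < 1)
    (q : ℝ)
    (τ : ℕ) (hτ1 : 1 ≤ τ) (hτN : τ ≤ N)
    (hlow : ∑ l ∈ Finset.Icc 1 (τ - 1), 1 / ϑ l ≤ q)
    (hhigh : q < ∑ l ∈ Finset.Icc 1 τ, 1 / ϑ l) :
    ∃ Δτ : ℝ, 0 < Δτ ∧ Δτ ≤ 1 ∧
      ∀ Δ : ℝ, 0 < Δ → Δ < Δτ →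
        ∃ p : ℕ → ℝ,
          (∀ l ∈ Finset.Icc 1 τ, 1 ≤ p l) ∧
          (∑ l ∈ Finset.Icc 1 τ, 1 / p l = 1) ∧
          (∀ l ∈ Finset.Icc 1 τ, ϑ l * q / p l < 1) ∧
          ((1 - Δ) * ∑ l ∈ Finset.Icc 1 τ, ϑ l * q / p l ≤
            ϑ τ * q + τ - ∑ l ∈ Finset.Icc 1 τ, ϑ τ / ϑ l) ∧
          (∀ κ : ℝ, 0 < κ →
            κ < (∑ l ∈ Finset.Icc 1 τ, 1 / ϑ l - q) / (2 * τ) →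
            ∃ l₀ ∈ Finset.Icc 1 τ, ϑ l₀ * (q / p l₀ + 2 * κ) < 1) := by
  obtain ⟨n, rfl⟩ : ∃ n, τ = n + 1 := ⟨τ - 1, by omega⟩
  have hτ : n + 1 ∉ Icc 1 n := by simp
  have hpos : ∀ l ∈ Icc 1 n, 0 < ϑ l := fun l hl => (hϑ l (Icc_subset_Icc_right (by omega) hl)).1
  obtain ⟨hθ0, hθ1⟩ := hϑ (n + 1) (mem_Icc.2 ⟨by omega, hτN⟩)
  rw [Nat.add_sub_cancel] at hlow
  have hcard : ((n + 1 : ℕ) : ℝ) = #(insert (n + 1) (Icc 1 n)) := by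
    rw [card_insert_of_notMem hτ, Nat.card_Icc, Nat.add_sub_cancel]
  rw [hcard]
  rw [← insert_Icc_right_eq_Icc_add_one (by omega)] at hhigh ⊢
  set α := ∑ l ∈ insert (n + 1) (Icc 1 n), 1 / ϑ l - q
  have hα : 0 < α / #(insert (n + 1) (Icc 1 n)) :=
    div_pos (by linarith) (Nat.cast_pos.2 (insert_nonempty _ _).card_pos)
  refine ⟨1, one_pos, le_rfl, fun Δ hΔ0 hΔ1 => ?_⟩
  obtain ⟨ε, hε0, hε1, hε⟩ := exists_pos_lt_one_mul_sum_le (Icc 1 n)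
    (fun l hl => (one_div_pos.2 (hpos l hl)).le) (lt_min hα hΔ0)
  have hεα := hε.trans (mul_le_mul_of_nonneg_left (min_le_left _ _) (Nat.cast_nonneg _))
  have hεΔ := hε.trans (mul_le_mul_of_nonneg_left (min_le_right _ _) (Nat.cast_nonneg _))
  exact ⟨holderExponents ϑ q (Icc 1 n) (n + 1) ε, one_le_holderExponents hpos hlow hε0 hε1,
    sum_one_div_holderExponents hτ, div_holderExponents_lt_one hτ hpos hlow hhigh hθ0 hε0 hεα,
    one_sub_mul_sum_div_holderExponents_le hτ hpos hlow hθ0 hθ1 hΔ0.le hΔ1.le hε0 hεΔ,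
    fun κ _ hκ => ⟨n + 1, mem_insert_self _ _,
      mul_div_holderExponents_self_add_lt_one hτ hpos hlow hθ0 hεα hκ⟩⟩

/-- Lemma 3.3: existence of Hölder exponents `p₁,…,p_τ` used in the generalized
Hölder inequality arguments for moments of local times. -/
theorem holder_exponents_exist (N : ℕ) (hN : 1 ≤ N) (ϑ : ℕ → ℝ)
    (hϑ : ∀ l ∈ Finset.Icc 1 N, 0 < ϑ l ∧ ϑ l < 1)
    (q : ℝ) (hq0 : 0 ≤ q) (hqN : q < ∑ l ∈ Finset.Icc 1 N, 1 / ϑ l)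
    (τ : ℕ) (hτ1 : 1 ≤ τ) (hτN : τ ≤ N)
    (hlow : ∑ l ∈ Finset.Icc 1 (τ - 1), 1 / ϑ l ≤ q)
    (hhigh : q < ∑ l ∈ Finset.Icc 1 τ, 1 / ϑ l) :
    ∃ Δτ : ℝ, 0 < Δτ ∧ Δτ ≤ 1 ∧
      ∀ Δ : ℝ, 0 < Δ → Δ < Δτ →
        ∃ p : ℕ → ℝ,
          (∀ l ∈ Finset.Icc 1 τ, 1 ≤ p l) ∧
          (∑ l ∈ Finset.Icc 1 τ, 1 / p l = 1) ∧
          (∀ l ∈ Finset.Icc 1 τ, ϑ l * q / p l < 1) ∧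
          ((1 - Δ) * ∑ l ∈ Finset.Icc 1 τ, ϑ l * q / p l ≤
            ϑ τ * q + τ - ∑ l ∈ Finset.Icc 1 τ, ϑ τ / ϑ l) ∧
          (∀ κ : ℝ, 0 < κ →
            κ < (∑ l ∈ Finset.Icc 1 τ, 1 / ϑ l - q) / (2 * τ) →
            ∃ l₀ ∈ Finset.Icc 1 τ, ϑ l₀ * (q / p l₀ + 2 * κ) < 1) :=
  holder_exponents_exist_general N ϑ hϑ q τ hτ1 hτN hlow hhigh
end

section
/- Let 0 < ε < T, I := [ε,T]^N, and for l = 1,…,N let h_l : I → ℝ be continuous with 0 < m_l ≤ h_l(v) ≤ M_l < 1 for all v ∈ I. Let θ : I → ℝ be continuous. Then ∫_I ∫_I (∑_{l=1}^N |u_l − v_l|^{h_l(v)})^{−θ(v)} du dv < ∞ if and only if both of the following hold: (a) θ(v) ≤ ∑_{l=1}^N 1/h_l(v) for every v ∈ I, and (b) ∫_I (∑_{l=1}^N 1/h_l(v) − θ(v))^{−1} dv < ∞. -/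
open MeasureTheory Finset
open scoped ENNReal

namespace LMSSAux

/-- Monotonicity of set lintegral under a pointwise bound on the set,
with no measurability assumptions on the functions. -/
lemma setLIntegral_mono_on'' {α : Type*} [MeasurableSpace α] {μ : Measure α} {s : Set α}
    (hs : MeasurableSet s) {f g : α → ℝ≥0∞} (h : ∀ x ∈ s, f x ≤ g x) :
    ∫⁻ x in s, f x ∂μ ≤ ∫⁻ x in s, g x ∂μ := by
  rw [← lintegral_indicator hs, ← lintegral_indicator hs]
  refine lintegral_mono fun x => ?_
  by_cases hx : x ∈ s
  · simpa [Set.indicator_of_mem hx] using h x hx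
  · simp [Set.indicator_of_notMem hx]

lemma rpow_sum' {x : ℝ} (hx : 0 < x) {ι : Type*} (s : Finset ι) (c : ι → ℝ) :
    x ^ (∑ i ∈ s, c i) = ∏ i ∈ s, x ^ c i := by
  classical
  induction s using Finset.cons_induction with
  | empty => simp
  | cons a s ha ih => rw [Finset.sum_cons, Finset.prod_cons, Real.rpow_add hx, ih]

section Meas

variable {N : ℕ}

/-- Continuity of the kernel `u ↦ ∑ |u l - v l| ^ a l`. -/
lemma cont_S (v a : Fin N → ℝ) (ha : ∀ l, 0 < a l) :
    Continuous fun u : Fin N → ℝ => ∑ l, |u l - v l| ^ a l := by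
  refine continuous_finset_sum _ fun l _ => ?_
  have h1 : Continuous fun x : ℝ => |x - v l| ^ a l := by
    rw [continuous_iff_continuousAt]
    intro x
    exact (Real.continuousAt_rpow_const _ _ (Or.inr (ha l).le)).comp
      ((continuous_abs.comp (continuous_id.sub continuous_const)).continuousAt)
  exact h1.comp (continuous_apply l)

lemma measSet_D (v a : Fin N → ℝ) (ha : ∀ l, 0 < a l) (s : ℝ) :
    MeasurableSet {u : Fin N → ℝ | ∑ l, |u l - v l| ^ a l ≤ s} :=
  (isClosed_le (cont_S v a ha) continuous_const).measurableSet

/-- Upper bound on the sub-level sets. -/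
lemma meas_upper (v a : Fin N → ℝ) (ha : ∀ l, 0 < a l) {s : ℝ} (hs : 0 < s) :
    volume {u : Fin N → ℝ | ∑ l, |u l - v l| ^ a l ≤ s}
      ≤ ENNReal.ofReal ((2:ℝ) ^ N * s ^ (∑ l, 1 / a l)) := by
  have hsub : {u : Fin N → ℝ | ∑ l, |u l - v l| ^ a l ≤ s}
      ⊆ Set.Icc (fun l => v l - s ^ (1 / a l)) (fun l => v l + s ^ (1 / a l)) := by
    intro u hu
    simp only [Set.mem_setOf_eq] at hu
    rw [Set.mem_Icc]
    constructor <;> intro l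
    all_goals {
      have hterm : |u l - v l| ^ a l ≤ s := by
        refine le_trans ?_ hu
        exact Finset.single_le_sum (f := fun i => |u i - v i| ^ a i)
          (fun i _ => Real.rpow_nonneg (abs_nonneg _) _) (mem_univ l)
      have habs : |u l - v l| ≤ s ^ (1 / a l) := by
        calc |u l - v l| = (|u l - v l| ^ a l) ^ (1 / a l) := by
              rw [← Real.rpow_mul (abs_nonneg _), mul_one_div, div_self (ha l).ne', Real.rpow_one]
          _ ≤ s ^ (1 / a l) :=
              Real.rpow_le_rpow (Real.rpow_nonneg (abs_nonneg _) _) hterm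
                (one_div_nonneg.mpr (ha l).le)
      have := abs_le.mp habs
      simp only [Pi.le_def] -- may not be needed
      linarith [this.1, this.2]
    }
  refine le_trans (measure_mono hsub) ?_
  rw [Real.volume_Icc_pi]
  have hnn : ∀ l : Fin N, (0:ℝ) ≤ 2 * s ^ (1 / a l) := fun l => by positivity
  have : ∀ l : Fin N, v l + s ^ (1 / a l) - (v l - s ^ (1 / a l)) = 2 * s ^ (1 / a l) := by
    intro l; ring
  simp_rw [this]
  rw [← ENNReal.ofReal_prod_of_nonneg (fun l _ => hnn l)]
  refine ENNReal.ofReal_le_ofReal (le_of_eq ?_)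
  rw [Finset.prod_mul_distrib, Finset.prod_const, ← rpow_sum' hs]
  simp [Finset.card_univ]

/-- Lower bound on the sub-level sets intersected with the box. -/
lemma meas_lower (hN : 1 ≤ N) {ε T : ℝ} (hεT : ε < T) {v : Fin N → ℝ}
    (hv : v ∈ Set.Icc (fun _ : Fin N => ε) (fun _ => T)) {a : Fin N → ℝ}
    (ha : ∀ l, 0 < a l) (ha1 : ∀ l, a l ≤ 1) {s : ℝ} (hs : 0 < s)
    (hs1 : s ≤ N * min ((T - ε) / 2) 1) :
    ENNReal.ofReal ((s / N) ^ (∑ l, 1 / a l))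
      ≤ volume (Set.Icc (fun _ : Fin N => ε) (fun _ => T)
          ∩ {u : Fin N → ℝ | ∑ l, |u l - v l| ^ a l ≤ s}) := by
  have hN0 : (0:ℝ) < N := by exact_mod_cast hN
  have hδ : (0:ℝ) < (T - ε) / 2 := by linarith
  have hsN : 0 < s / N := div_pos hs hN0
  have hsN1 : s / N ≤ min ((T - ε) / 2) 1 := by
    rw [div_le_iff₀ hN0]
    calc s ≤ N * min ((T - ε) / 2) 1 := hs1
      _ = min ((T - ε) / 2) 1 * N := mul_comm _ _
  set ρ : Fin N → ℝ := fun l => (s / N) ^ (1 / a l) with hρ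
  have hρpos : ∀ l, 0 < ρ l := fun l => Real.rpow_pos_of_pos hsN _
  have hρδ : ∀ l, ρ l ≤ (T - ε) / 2 := by
    intro l
    have h1 : (1:ℝ) ≤ 1 / a l := by
      rw [le_div_iff₀ (ha l)]; simpa using ha1 l
    calc ρ l ≤ (s / N) ^ (1:ℝ) :=
          Real.rpow_le_rpow_of_exponent_ge hsN (hsN1.trans (min_le_right _ _)) h1
      _ = s / N := Real.rpow_one _
      _ ≤ (T - ε) / 2 := hsN1.trans (min_le_left _ _)
  have hρa : ∀ l, ρ l ^ a l = s / N := by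
    intro l
    rw [hρ, ← Real.rpow_mul hsN.le, one_div, inv_mul_cancel₀ (ha l).ne', Real.rpow_one]
  set mid := (ε + T) / 2 with hmid
  set lo : Fin N → ℝ := fun l => if v l ≤ mid then v l else v l - ρ l with hlo
  set hi : Fin N → ℝ := fun l => if v l ≤ mid then v l + ρ l else v l with hhi
  rw [Set.mem_Icc] at hv
  have hsub : Set.Icc lo hi ⊆ Set.Icc (fun _ : Fin N => ε) (fun _ => T)
      ∩ {u : Fin N → ℝ | ∑ l, |u l - v l| ^ a l ≤ s} := by
    intro u hu
    rw [Set.mem_Icc] at hu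
    have habs : ∀ l, |u l - v l| ≤ ρ l := by
      intro l
      have h1 := hu.1 l
      have h2 := hu.2 l
      rw [hlo] at h1; rw [hhi] at h2
      by_cases hc : v l ≤ mid <;> simp only [hc, if_true, if_false] at h1 h2 <;>
        rw [abs_le] <;> constructor <;> linarith [hρpos l]
    constructor
    · rw [Set.mem_Icc]
      constructor <;> intro l
      · have h1 := hu.1 l
        rw [hlo] at h1
        by_cases hc : v l ≤ mid <;> simp only [hc, if_true, if_false] at h1
        · exact le_trans (hv.1 l) h1
        · have := hρδ l; simp only [hmid] at hc; linarith
      · have h2 := hu.2 l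
        rw [hhi] at h2
        by_cases hc : v l ≤ mid <;> simp only [hc, if_true, if_false] at h2
        · have := hρδ l; simp only [hmid] at hc; linarith
        · exact le_trans h2 (hv.2 l)
    · simp only [Set.mem_setOf_eq]
      calc ∑ l, |u l - v l| ^ a l ≤ ∑ l : Fin N, s / N := by
            refine Finset.sum_le_sum fun l _ => ?_
            calc |u l - v l| ^ a l ≤ ρ l ^ a l :=
                  Real.rpow_le_rpow (abs_nonneg _) (habs l) (ha l).le
              _ = s / N := hρa l
        _ = s := by
            rw [Finset.sum_const, Finset.card_univ, Fintype.card_fin, nsmul_eq_mul]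
            field_simp
  refine le_trans (le_of_eq ?_) (measure_mono hsub)
  rw [Real.volume_Icc_pi]
  have hdiff : ∀ l, hi l - lo l = ρ l := by
    intro l
    rw [hlo, hhi]
    by_cases hc : v l ≤ mid <;> simp [hc] <;> ring
  simp_rw [hdiff]
  rw [← ENNReal.ofReal_prod_of_nonneg (fun l _ => (hρpos l).le)]
  congr 1
  rw [rpow_sum' hsN]



end Meas

section Shell

variable {N : ℕ}

lemma one_le_Q (hN : 1 ≤ N) {a : Fin N → ℝ} (ha : ∀ l, 0 < a l) (ha1 : ∀ l, a l ≤ 1) :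
    (1:ℝ) ≤ ∑ l, 1 / a l := by
  have h1 : ∀ l : Fin N, (1:ℝ) ≤ 1 / a l := fun l => by
    rw [le_div_iff₀ (ha l)]; simpa using ha1 l
  calc (1:ℝ) ≤ (N:ℝ) := by exact_mod_cast hN
    _ = ∑ _l : Fin N, (1:ℝ) := by simp
    _ ≤ ∑ l, 1 / a l := Finset.sum_le_sum fun l _ => h1 l

/-- The shell sum lower bound for the local integral. -/
lemma shell_lower (hN : 1 ≤ N) {ε T : ℝ} (hεT : ε < T) {v : Fin N → ℝ}
    (hv : v ∈ Set.Icc (fun _ : Fin N => ε) (fun _ => T)) {a : Fin N → ℝ}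
    (ha : ∀ l, 0 < a l) (ha1 : ∀ l, a l ≤ 1) {β : ℝ} (hβ0 : 0 ≤ β) :
    ENNReal.ofReal (((N:ℝ) * 2 ^ (N + 1)) ^ (-(∑ l, 1 / a l))
        * ((N:ℝ) * min ((T - ε) / 2) 1) ^ (∑ l, 1 / a l - β))
      * ∑' k : ℕ, (ENNReal.ofReal (((N:ℝ) * 2 ^ (N + 1)) ^ (-(∑ l, 1 / a l - β)))) ^ k
    ≤ ∫⁻ u in Set.Icc (fun _ : Fin N => ε) (fun _ => T),
        (ENNReal.ofReal (∑ l, |u l - v l| ^ a l)) ^ (-β) := by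
  have hN0 : (0:ℝ) < N := by exact_mod_cast hN
  have hδ : (0:ℝ) < min ((T - ε) / 2) 1 := lt_min (by linarith) one_pos
  set Q : ℝ := ∑ l, 1 / a l with hQdef
  have hQ1 : (1:ℝ) ≤ Q := one_le_Q hN ha ha1
  set γ : ℝ := Q - β with hγdef
  set r : ℝ := (N:ℝ) * 2 ^ (N + 1) with hrdef
  have h2N : (1:ℝ) ≤ 2 ^ N := one_le_pow₀ (by norm_num)
  have h2N1 : (1:ℝ) ≤ 2 ^ (N + 1) := one_le_pow₀ (by norm_num)
  have hr1 : (1:ℝ) ≤ r := by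
    calc (1:ℝ) = 1 * 1 := by ring
      _ ≤ (N:ℝ) * 2 ^ (N + 1) := by
          apply mul_le_mul (by exact_mod_cast hN) h2N1 (by norm_num) hN0.le
  have hrpos : (0:ℝ) < r := lt_of_lt_of_le one_pos hr1
  have hrinv1 : r⁻¹ ≤ 1 := by
    rw [inv_eq_one_div]; exact (div_le_one hrpos).mpr hr1
  have hrinv0 : (0:ℝ) ≤ r⁻¹ := inv_nonneg.mpr hrpos.le
  set s₁ : ℝ := (N:ℝ) * min ((T - ε) / 2) 1 with hs₁def
  have hs₁pos : 0 < s₁ := mul_pos hN0 hδ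
  set t : ℕ → ℝ := fun k => s₁ * r⁻¹ ^ k with htdef
  have ht_pos : ∀ k, 0 < t k := fun k => mul_pos hs₁pos (pow_pos (inv_pos.mpr hrpos) k)
  have ht_le : ∀ k, t k ≤ s₁ := fun k => by
    calc t k ≤ s₁ * 1 := mul_le_mul_of_nonneg_left (pow_le_one₀ hrinv0 hrinv1) hs₁pos.le
      _ = s₁ := mul_one _
  have ht_succ : ∀ k, t (k + 1) = t k * r⁻¹ := fun k => by
    simp only [htdef, pow_succ, mul_assoc]
  have ht_anti : ∀ j k, j ≤ k → t k ≤ t j := fun j k hjk =>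
    mul_le_mul_of_nonneg_left (pow_le_pow_of_le_one hrinv0 hrinv1 hjk) hs₁pos.le
  set I : Set (Fin N → ℝ) := Set.Icc (fun _ : Fin N => ε) (fun _ => T) with hIdef
  set S : (Fin N → ℝ) → ℝ := fun u => ∑ l, |u l - v l| ^ a l with hSdef
  set D : ℝ → Set (Fin N → ℝ) := fun s => {u | S u ≤ s} with hDdef
  have hDmeas : ∀ s, MeasurableSet (D s) := fun s => measSet_D v a ha s
  set A : ℕ → Set (Fin N → ℝ) := fun k => (I ∩ D (t k)) \ D (t (k + 1)) with hAdef
  have hAmeas : ∀ k, MeasurableSet (A k) :=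
    fun k => (measurableSet_Icc.inter (hDmeas _)).diff (hDmeas _)
  have hAdisj : Pairwise (Function.onFun Disjoint A) := by
    have key : ∀ j k, j < k → Disjoint (A j) (A k) := by
      intro j k hjk
      rw [Set.disjoint_right]
      intro u huk huj
      have h1 : S u ≤ t k := huk.1.2
      have h2 : u ∉ D (t (j + 1)) := huj.2
      exact h2 (le_trans h1 (ht_anti (j + 1) k hjk))
    intro j k hne
    rcases lt_or_gt_of_ne hne with hc | hc
    · exact key j k hc
    · exact (key k j hc).symm
  -- lower bound on each piece
  have hpiece : ∀ k, ENNReal.ofReal (r ^ (-Q) * s₁ ^ γ)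
      * (ENNReal.ofReal (r ^ (-γ))) ^ k ≤ ∫⁻ u in A k, (ENNReal.ofReal (S u)) ^ (-β) := by
    intro k
    have hbound : ∫⁻ _u in A k, (ENNReal.ofReal (t k)) ^ (-β) ∂volume
        ≤ ∫⁻ u in A k, (ENNReal.ofReal (S u)) ^ (-β) := by
      refine setLIntegral_mono_on'' (hAmeas k) fun u hu => ?_
      rw [ENNReal.rpow_neg, ENNReal.rpow_neg]
      exact ENNReal.inv_le_inv.mpr
        (ENNReal.rpow_le_rpow (ENNReal.ofReal_le_ofReal hu.1.2) hβ0)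
    rw [setLIntegral_const] at hbound
    refine le_trans ?_ hbound
    -- volume (A k) ≥ ofReal (t (k+1) ^ Q)
    have hvol : ENNReal.ofReal (t (k + 1) ^ Q) ≤ volume (A k) := by
      have hXY : volume (I ∩ D (t k)) ≤ volume (A k) + volume (D (t (k + 1))) := by
        refine le_trans (measure_mono ?_) (measure_union_le _ _)
        intro u hu
        by_cases hc : u ∈ D (t (k + 1))
        · exact Or.inr hc
        · exact Or.inl ⟨hu, hc⟩
      have hX : ENNReal.ofReal ((t k / N) ^ Q) ≤ volume (I ∩ D (t k)) :=
        meas_lower hN hεT hv ha ha1 (ht_pos k) (ht_le k)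
      have hY : volume (D (t (k + 1))) ≤ ENNReal.ofReal ((2:ℝ) ^ N * t (k + 1) ^ Q) :=
        meas_upper v a ha (ht_pos (k + 1))
      have hreal : t (k + 1) ^ Q + (2:ℝ) ^ N * t (k + 1) ^ Q ≤ (t k / N) ^ Q := by
        have htk : t k / N = 2 ^ (N + 1) * t (k + 1) := by
          rw [ht_succ k]
          field_simp [hrdef]
          ring
        rw [htk, Real.mul_rpow (by positivity) (ht_pos (k + 1)).le]
        have h1 : (2:ℝ) ^ (N + 1) ≤ ((2:ℝ) ^ (N + 1)) ^ Q := by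
          calc (2:ℝ) ^ (N + 1) = ((2:ℝ) ^ (N + 1)) ^ (1:ℝ) := (Real.rpow_one _).symm
            _ ≤ ((2:ℝ) ^ (N + 1)) ^ Q := Real.rpow_le_rpow_of_exponent_le h2N1 hQ1
        have h2 : (1:ℝ) + 2 ^ N ≤ (2:ℝ) ^ (N + 1) := by
          rw [pow_succ]; nlinarith
        have h3 : (0:ℝ) ≤ t (k + 1) ^ Q := Real.rpow_nonneg (ht_pos (k + 1)).le _
        nlinarith
      calc ENNReal.ofReal (t (k + 1) ^ Q)
          ≤ ENNReal.ofReal ((t k / N) ^ Q - (2:ℝ) ^ N * t (k + 1) ^ Q) :=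
            ENNReal.ofReal_le_ofReal (by linarith)
        _ = ENNReal.ofReal ((t k / N) ^ Q) - ENNReal.ofReal ((2:ℝ) ^ N * t (k + 1) ^ Q) :=
            ENNReal.ofReal_sub _ (by positivity)
        _ ≤ volume (I ∩ D (t k)) - volume (D (t (k + 1))) := tsub_le_tsub hX hY
        _ ≤ volume (A k) := tsub_le_iff_right.mpr hXY
    -- identity for the constant
    have hid : ENNReal.ofReal (r ^ (-Q) * s₁ ^ γ) * (ENNReal.ofReal (r ^ (-γ))) ^ k
        = (ENNReal.ofReal (t k)) ^ (-β) * ENNReal.ofReal (t (k + 1) ^ Q) := by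
      rw [ENNReal.ofReal_rpow_of_pos (ht_pos k),
        ← ENNReal.ofReal_pow (Real.rpow_nonneg hrpos.le _),
        ← ENNReal.ofReal_mul (by positivity),
        ← ENNReal.ofReal_mul (Real.rpow_nonneg (ht_pos k).le _)]
      congr 1
      -- real identity
      have e1 : t (k + 1) ^ Q = t k ^ Q * r ^ (-Q) := by
        rw [ht_succ k, Real.mul_rpow (ht_pos k).le hrinv0, Real.inv_rpow hrpos.le,
          ← Real.rpow_neg hrpos.le]
      have e2 : t k ^ (-β) * t k ^ Q = t k ^ γ := by
        rw [← Real.rpow_add (ht_pos k), hγdef]; ring_nf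
      have e3 : t k ^ γ = s₁ ^ γ * (r ^ (-γ)) ^ k := by
        rw [htdef]
        rw [Real.mul_rpow hs₁pos.le (pow_nonneg hrinv0 k)]
        congr 1
        rw [← Real.rpow_natCast r⁻¹ k, ← Real.rpow_natCast (r ^ (-γ)) k,
          ← Real.rpow_mul hrinv0,
          Real.inv_rpow hrpos.le, ← Real.rpow_neg hrpos.le, ← Real.rpow_mul hrpos.le]
        congr 1
        ring
      rw [e1, ← mul_assoc, e2, e3]
      ring
    rw [hid]
    exact mul_le_mul_right hvol _
  calc ENNReal.ofReal (r ^ (-Q) * s₁ ^ γ) * ∑' k : ℕ, (ENNReal.ofReal (r ^ (-γ))) ^ k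
      = ∑' k : ℕ, ENNReal.ofReal (r ^ (-Q) * s₁ ^ γ) * (ENNReal.ofReal (r ^ (-γ))) ^ k :=
        ENNReal.tsum_mul_left.symm
    _ ≤ ∑' k : ℕ, ∫⁻ u in A k, (ENNReal.ofReal (S u)) ^ (-β) := ENNReal.tsum_le_tsum hpiece
    _ = ∫⁻ u in ⋃ k, A k, (ENNReal.ofReal (S u)) ^ (-β) :=
        (lintegral_iUnion hAmeas hAdisj _).symm
    _ ≤ ∫⁻ u in I, (ENNReal.ofReal (S u)) ^ (-β) :=
        lintegral_mono_set (Set.iUnion_subset fun k u hu => hu.1.1)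

end Shell


noncomputable def CB (N : ℕ) (ε T Qb : ℝ) : ℝ≥0∞ :=
  (ENNReal.ofReal (((N:ℝ) * 2 ^ (N + 1)) ^ (-(Qb + 1))
    * min ((N:ℝ) * min ((T - ε) / 2) 1) 1))⁻¹ + 1

lemma lower_main {N : ℕ} (hN : 1 ≤ N) {ε T : ℝ} (hεT : ε < T) {Qb : ℝ} {v : Fin N → ℝ}
    (hv : v ∈ Set.Icc (fun _ : Fin N => ε) (fun _ => T)) {a : Fin N → ℝ}
    (ha : ∀ l, 0 < a l) (ha1 : ∀ l, a l ≤ 1) (hQb : ∑ l, 1 / a l ≤ Qb) (β : ℝ) :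
    (ENNReal.ofReal (∑ l, 1 / a l - β))⁻¹
      ≤ CB N ε T Qb * ((∫⁻ u in Set.Icc (fun _ : Fin N => ε) (fun _ => T),
          (ENNReal.ofReal (∑ l, |u l - v l| ^ a l)) ^ (-β)) + 1) := by
  have hN0 : (0:ℝ) < N := by exact_mod_cast hN
  have hδ : (0:ℝ) < min ((T - ε) / 2) 1 := lt_min (by linarith) one_pos
  set Q : ℝ := ∑ l, 1 / a l with hQdef
  have hQ1 : (1:ℝ) ≤ Q := one_le_Q hN ha ha1
  set γ : ℝ := Q - β with hγdef
  set r : ℝ := (N:ℝ) * 2 ^ (N + 1) with hrdef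
  have h2N1 : (1:ℝ) ≤ 2 ^ (N + 1) := one_le_pow₀ (by norm_num)
  have hr1 : (1:ℝ) ≤ r := by
    calc (1:ℝ) = 1 * 1 := by ring
      _ ≤ (N:ℝ) * 2 ^ (N + 1) := by
          apply mul_le_mul (by exact_mod_cast hN) h2N1 (by norm_num) hN0.le
  have hrpos : (0:ℝ) < r := lt_of_lt_of_le one_pos hr1
  set s₁ : ℝ := (N:ℝ) * min ((T - ε) / 2) 1 with hs₁def
  have hs₁pos : 0 < s₁ := mul_pos hN0 hδ
  set J := ∫⁻ u in Set.Icc (fun _ : Fin N => ε) (fun _ => T),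
      (ENNReal.ofReal (∑ l, |u l - v l| ^ a l)) ^ (-β) with hJdef
  set c₀ : ℝ≥0∞ := ENNReal.ofReal (r ^ (-(Qb + 1)) * min s₁ 1) with hc₀def
  have hc₀arg : (0:ℝ) < r ^ (-(Qb + 1)) * min s₁ 1 :=
    mul_pos (Real.rpow_pos_of_pos hrpos _) (lt_min hs₁pos one_pos)
  have hc₀0 : c₀ ≠ 0 := by
    rw [hc₀def]; exact (ENNReal.ofReal_pos.mpr hc₀arg).ne'
  have hc₀top : c₀ ≠ ⊤ := ENNReal.ofReal_ne_top
  have hCB : CB N ε T Qb = c₀⁻¹ + 1 := rfl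
  rcases le_or_gt 1 γ with hγ1 | hγ1
  · -- trivial case : LHS ≤ 1
    have h1 : (ENNReal.ofReal γ)⁻¹ ≤ 1 := by
      rw [show (1:ℝ≥0∞) = (1:ℝ≥0∞)⁻¹ from inv_one.symm]
      exact ENNReal.inv_le_inv.mpr (ENNReal.one_le_ofReal.mpr hγ1)
    refine le_trans h1 ?_
    calc (1:ℝ≥0∞) = 1 * 1 := (one_mul 1).symm
      _ ≤ CB N ε T Qb * (J + 1) := by
          refine mul_le_mul' ?_ le_add_self
          rw [hCB]; exact le_add_self
  · have hβ0 : 0 ≤ β := by simp only [hγdef] at hγ1; linarith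
    have hshell := shell_lower hN hεT hv ha ha1 hβ0
    rw [← hQdef, ← hγdef, ← hrdef, ← hs₁def, ← hJdef] at hshell
    set x : ℝ≥0∞ := ENNReal.ofReal (r ^ (-γ)) with hxdef
    have hgeom : ∑' k : ℕ, x ^ k = (1 - x)⁻¹ := ENNReal.tsum_geometric x
    set c₁ : ℝ≥0∞ := ENNReal.ofReal (r ^ (-Q) * s₁ ^ γ) with hc₁def
    have hc₁arg : (0:ℝ) < r ^ (-Q) * s₁ ^ γ :=
      mul_pos (Real.rpow_pos_of_pos hrpos _) (Real.rpow_pos_of_pos hs₁pos _)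
    have hc₁0 : c₁ ≠ 0 := (ENNReal.ofReal_pos.mpr hc₁arg).ne'
    rcases le_or_gt γ 0 with hγ0 | hγ0
    · -- J = ⊤
      have hx1 : (1:ℝ≥0∞) ≤ x := by
        rw [hxdef]
        exact ENNReal.one_le_ofReal.mpr (Real.one_le_rpow hr1 (neg_nonneg.mpr hγ0))
      have hsum : ∑' k : ℕ, x ^ k = ⊤ := by
        rw [hgeom, tsub_eq_zero_of_le hx1, ENNReal.inv_zero]
      have hJtop : J = ⊤ := by
        refine top_le_iff.mp ?_
        calc (⊤:ℝ≥0∞) = c₁ * ⊤ := (ENNReal.mul_top hc₁0).symm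
          _ = c₁ * ∑' k : ℕ, x ^ k := by rw [hsum]
          _ ≤ J := hshell
      have : CB N ε T Qb * (J + 1) = ⊤ := by
        rw [hJtop, top_add]
        refine ENNReal.mul_top ?_
        rw [hCB]
        simp
      rw [this]; exact le_top
    · -- quantitative case
      have hreal1 : 1 - r ^ (-γ) ≤ γ * r := by
        have hlog : Real.log r ≤ r := (Real.log_le_sub_one_of_pos hrpos).trans (by linarith)
        have hlognn : 0 ≤ Real.log r := Real.log_nonneg hr1
        have hrw : r ^ (-γ) = Real.exp (Real.log r * (-γ)) := Real.rpow_def_of_pos hrpos _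
        have h := Real.add_one_le_exp (Real.log r * (-γ))
        rw [hrw]
        nlinarith
      have hsum_ge : (ENNReal.ofReal (γ * r))⁻¹ ≤ ∑' k : ℕ, x ^ k := by
        rw [hgeom]
        refine ENNReal.inv_le_inv.mpr ?_
        have : (1:ℝ≥0∞) - x = ENNReal.ofReal (1 - r ^ (-γ)) := by
          rw [ENNReal.ofReal_sub _ (Real.rpow_nonneg hrpos.le _), ENNReal.ofReal_one, hxdef]
        rw [this]
        exact ENNReal.ofReal_le_ofReal hreal1
      have hJge : c₁ * (ENNReal.ofReal (γ * r))⁻¹ ≤ J :=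
        le_trans (mul_le_mul_right hsum_ge c₁) hshell
      -- rearrange : (ofReal γ)⁻¹ * (c₁ * (ofReal r)⁻¹)
      have hsplit : c₁ * (ENNReal.ofReal (γ * r))⁻¹
          = (c₁ * (ENNReal.ofReal r)⁻¹) * (ENNReal.ofReal γ)⁻¹ := by
        rw [ENNReal.ofReal_mul hγ0.le,
          ENNReal.mul_inv (Or.inl (ENNReal.ofReal_pos.mpr hγ0).ne') (Or.inl ENNReal.ofReal_ne_top)]
        ring
      have hc₀le : c₀ ≤ c₁ * (ENNReal.ofReal r)⁻¹ := by
        rw [← ENNReal.ofReal_inv_of_pos hrpos, hc₁def,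
          ← ENNReal.ofReal_mul (mul_pos (Real.rpow_pos_of_pos hrpos _)
            (Real.rpow_pos_of_pos hs₁pos _)).le]
        refine ENNReal.ofReal_le_ofReal ?_
        have e1 : r ^ (-Q) * s₁ ^ γ * r⁻¹ = r ^ (-(Q + 1)) * s₁ ^ γ := by
          rw [← Real.rpow_neg_one r, mul_comm (r ^ (-Q)) (s₁ ^ γ), mul_assoc,
            ← Real.rpow_add hrpos]
          ring_nf
        rw [e1]
        have h2 : r ^ (-(Qb + 1)) ≤ r ^ (-(Q + 1)) :=
          Real.rpow_le_rpow_of_exponent_le hr1 (by linarith)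
        have h3 : min s₁ 1 ≤ s₁ ^ γ := by
          rcases le_total s₁ 1 with hc | hc
          · calc min s₁ 1 ≤ s₁ := min_le_left _ _
              _ = s₁ ^ (1:ℝ) := (Real.rpow_one _).symm
              _ ≤ s₁ ^ γ := Real.rpow_le_rpow_of_exponent_ge hs₁pos hc hγ1.le
          · calc min s₁ 1 ≤ 1 := min_le_right _ _
              _ = s₁ ^ (0:ℝ) := (Real.rpow_zero _).symm
              _ ≤ s₁ ^ γ := Real.rpow_le_rpow_of_exponent_le hc hγ0.le
        have h4 : (0:ℝ) ≤ r ^ (-(Qb + 1)) := (Real.rpow_pos_of_pos hrpos _).le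
        have h5 : (0:ℝ) < r ^ (-(Q + 1)) := Real.rpow_pos_of_pos hrpos _
        have h6 : (0:ℝ) ≤ min s₁ 1 := le_min hs₁pos.le zero_le_one
        nlinarith
      have hfinal : c₀ * (ENNReal.ofReal γ)⁻¹ ≤ J := by
        refine le_trans ?_ hJge
        rw [hsplit]
        exact mul_le_mul_left hc₀le _
      have : (ENNReal.ofReal γ)⁻¹ ≤ c₀⁻¹ * J := by
        calc (ENNReal.ofReal γ)⁻¹ = c₀⁻¹ * (c₀ * (ENNReal.ofReal γ)⁻¹) := by
              rw [← mul_assoc, ENNReal.inv_mul_cancel hc₀0 hc₀top, one_mul]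
          _ ≤ c₀⁻¹ * J := mul_le_mul_right hfinal _
      refine le_trans this ?_
      rw [hCB]
      exact mul_le_mul' le_self_add le_self_add



noncomputable def CA (N : ℕ) (ε T B : ℝ) : ℝ≥0∞ :=
  (ENNReal.ofReal ((max ((N:ℝ) * max (T - ε) 1) 1) ^ B)
      + ENNReal.ofReal ((min (T - ε) 1) ^ (-B)))
    * volume (Set.Icc (fun _ : Fin N => ε) (fun _ => T))
  + 4 * ENNReal.ofReal ((2:ℝ) ^ N * (2:ℝ) ^ B)

lemma CA_lt_top (N : ℕ) (ε T B : ℝ) : CA N ε T B < ⊤ := by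
  refine ENNReal.add_lt_top.mpr ⟨?_, ?_⟩
  · exact ENNReal.mul_lt_top
      (ENNReal.add_lt_top.mpr ⟨ENNReal.ofReal_lt_top, ENNReal.ofReal_lt_top⟩)
      isCompact_Icc.measure_lt_top
  · exact ENNReal.mul_lt_top (by norm_num) ENNReal.ofReal_lt_top

lemma geom_bound {γ : ℝ} (hγ : 0 < γ) :
    (ENNReal.ofReal (1 - (2:ℝ) ^ (-γ)))⁻¹ ≤ 4 * (1 + (ENNReal.ofReal γ)⁻¹) := by
  rcases le_or_gt 1 γ with hγ1 | hγ1
  · have h1 : (2:ℝ) ^ (-γ) ≤ 2⁻¹ := by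
      calc (2:ℝ) ^ (-γ) ≤ (2:ℝ) ^ (-1:ℝ) :=
            Real.rpow_le_rpow_of_exponent_le one_le_two (by linarith)
        _ = 2⁻¹ := Real.rpow_neg_one 2
    have h2 : (2⁻¹:ℝ) ≤ 1 - (2:ℝ) ^ (-γ) := by linarith
    calc (ENNReal.ofReal (1 - (2:ℝ) ^ (-γ)))⁻¹
        ≤ (ENNReal.ofReal (2⁻¹:ℝ))⁻¹ :=
          ENNReal.inv_le_inv.mpr (ENNReal.ofReal_le_ofReal h2)
      _ = ENNReal.ofReal 2 := by
          rw [ENNReal.ofReal_inv_of_pos (by norm_num : (0:ℝ) < 2), inv_inv]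
      _ ≤ 4 * 1 := by
          rw [mul_one]
          calc ENNReal.ofReal 2 ≤ ENNReal.ofReal 4 := ENNReal.ofReal_le_ofReal (by norm_num)
            _ = 4 := by norm_num [ENNReal.ofReal_ofNat]
      _ ≤ 4 * (1 + (ENNReal.ofReal γ)⁻¹) := mul_le_mul_right le_self_add _
  · have hlog2a : (1/2 : ℝ) ≤ Real.log 2 := by
      have := Real.log_two_gt_d9; linarith
    have hlog2b : Real.log 2 ≤ 1 := by
      have := Real.log_two_lt_d9; linarith
    set z : ℝ := Real.log 2 * γ with hzdef
    have hz0 : 0 ≤ z := mul_nonneg (by linarith) hγ.le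
    have hz1 : z ≤ 1 := by nlinarith
    have hzγ : γ / 2 ≤ z := by nlinarith
    have hE : (2:ℝ) ^ (-γ) = Real.exp (-z) := by
      rw [Real.rpow_def_of_pos (by norm_num : (0:ℝ) < 2)]
      ring_nf
      rw [hzdef]
    have h1 : Real.exp (-z) * (1 + z) ≤ 1 := by
      have ha := Real.add_one_le_exp z
      have hb := Real.exp_pos z
      rw [Real.exp_neg]
      rw [inv_mul_le_iff₀ hb, mul_one]
      linarith
    have h3 : γ / 4 ≤ 1 - Real.exp (-z) := by
      have hz2 : z / (1 + z) ≤ 1 - Real.exp (-z) := by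
        rw [div_le_iff₀ (by linarith : (0:ℝ) < 1 + z)]
        nlinarith
      have hz3 : z / 2 ≤ z / (1 + z) :=
        div_le_div_of_nonneg_left hz0 (by linarith) (by linarith)
      linarith
    have h4 : γ / 4 ≤ 1 - (2:ℝ) ^ (-γ) := by rw [hE]; exact h3
    calc (ENNReal.ofReal (1 - (2:ℝ) ^ (-γ)))⁻¹
        ≤ (ENNReal.ofReal (γ / 4))⁻¹ :=
          ENNReal.inv_le_inv.mpr (ENNReal.ofReal_le_ofReal h4)
      _ = 4 * (ENNReal.ofReal γ)⁻¹ := by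
          rw [show γ / 4 = γ * 4⁻¹ by ring, ENNReal.ofReal_mul hγ.le,
            ENNReal.mul_inv (Or.inl (ENNReal.ofReal_pos.mpr hγ).ne')
              (Or.inl ENNReal.ofReal_ne_top),
            ENNReal.ofReal_inv_of_pos (by norm_num : (0:ℝ) < 4), inv_inv]
          rw [show ENNReal.ofReal 4 = 4 by norm_num [ENNReal.ofReal_ofNat]]
          ring
      _ ≤ 4 * (1 + (ENNReal.ofReal γ)⁻¹) := mul_le_mul_right le_add_self _

lemma upper_main {N : ℕ} (hN : 1 ≤ N) {ε T : ℝ} (hεT : ε < T) {B : ℝ} (hB : 0 ≤ B)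
    {v : Fin N → ℝ} (hv : v ∈ Set.Icc (fun _ : Fin N => ε) (fun _ => T)) {a : Fin N → ℝ}
    (ha : ∀ l, 0 < a l) (ha1 : ∀ l, a l ≤ 1) {β : ℝ} (hβB : |β| ≤ B)
    (hβQ : β < ∑ l, 1 / a l) :
    (∫⁻ u in Set.Icc (fun _ : Fin N => ε) (fun _ => T),
        (ENNReal.ofReal (∑ l, |u l - v l| ^ a l)) ^ (-β))
      ≤ CA N ε T B * (1 + (ENNReal.ofReal (∑ l, 1 / a l - β))⁻¹) := by
  have hβB1 := abs_le.mp hβB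
  have hN0 : (0:ℝ) < N := by exact_mod_cast hN
  set Q : ℝ := ∑ l, 1 / a l with hQdef
  set γ : ℝ := Q - β with hγdef
  have hγpos : 0 < γ := by simp only [hγdef]; linarith
  have hγinv : (1:ℝ≥0∞) ≤ 1 + (ENNReal.ofReal γ)⁻¹ := le_self_add
  set I : Set (Fin N → ℝ) := Set.Icc (fun _ : Fin N => ε) (fun _ => T) with hIdef
  set S : (Fin N → ℝ) → ℝ := fun u => ∑ l, |u l - v l| ^ a l with hSdef
  have hCA2 : (ENNReal.ofReal ((max ((N:ℝ) * max (T - ε) 1) 1) ^ B)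
      + ENNReal.ofReal ((min (T - ε) 1) ^ (-B))) * volume I ≤ CA N ε T B := le_self_add
  rcases le_or_gt β 0 with hβ | hβ
  · -- bounded integrand case
    set X : ℝ := max ((N:ℝ) * max (T - ε) 1) 1 with hXdef
    have hX1 : (1:ℝ) ≤ X := le_max_right _ _
    have hSle : ∀ u ∈ I, S u ≤ X := by
      intro u hu
      rw [hIdef, Set.mem_Icc] at hu hv
      have hterm : ∀ l, |u l - v l| ^ a l ≤ max (T - ε) 1 := by
        intro l
        have habs : |u l - v l| ≤ T - ε := by
          have h1 := hu.1 l; have h2 := hu.2 l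
          have h3 := hv.1 l; have h4 := hv.2 l
          rw [abs_le]; constructor <;> simp only at h1 h2 h3 h4 <;> linarith
        calc |u l - v l| ^ a l ≤ (max (T - ε) 1) ^ a l :=
              Real.rpow_le_rpow (abs_nonneg _) (habs.trans (le_max_left _ _)) (ha l).le
          _ ≤ (max (T - ε) 1) ^ (1:ℝ) :=
              Real.rpow_le_rpow_of_exponent_le (le_max_right _ _) (ha1 l)
          _ = max (T - ε) 1 := Real.rpow_one _
      calc S u ≤ ∑ _l : Fin N, max (T - ε) 1 := Finset.sum_le_sum fun l _ => hterm l
        _ = (N:ℝ) * max (T - ε) 1 := by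
            rw [Finset.sum_const, Finset.card_univ, Fintype.card_fin, nsmul_eq_mul]
        _ ≤ X := le_max_left _ _
    have hpt : ∀ u ∈ I, (ENNReal.ofReal (S u)) ^ (-β) ≤ ENNReal.ofReal (X ^ B) := by
      intro u hu
      calc (ENNReal.ofReal (S u)) ^ (-β) ≤ (ENNReal.ofReal X) ^ (-β) :=
            ENNReal.rpow_le_rpow (ENNReal.ofReal_le_ofReal (hSle u hu)) (by linarith)
        _ ≤ (ENNReal.ofReal X) ^ B :=
            ENNReal.rpow_le_rpow_of_exponent_le (ENNReal.one_le_ofReal.mpr hX1) (by linarith)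
        _ = ENNReal.ofReal (X ^ B) :=
            ENNReal.ofReal_rpow_of_pos (lt_of_lt_of_le one_pos hX1)
    calc (∫⁻ u in I, (ENNReal.ofReal (S u)) ^ (-β))
        ≤ ∫⁻ _u in I, ENNReal.ofReal (X ^ B) ∂volume :=
          setLIntegral_mono_on'' measurableSet_Icc hpt
      _ = ENNReal.ofReal (X ^ B) * volume I := setLIntegral_const _ _
      _ ≤ CA N ε T B := by
          refine le_trans ?_ hCA2
          exact mul_le_mul_left le_self_add _
      _ = CA N ε T B * 1 := (mul_one _).symm
      _ ≤ CA N ε T B * (1 + (ENNReal.ofReal γ)⁻¹) := mul_le_mul_right hγinv _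
  · -- singular case  : dyadic shells
    set s₂ : ℝ := min (T - ε) 1 with hs₂def
    have hs₂pos : 0 < s₂ := lt_min (by linarith) one_pos
    have hs₂1 : s₂ ≤ 1 := min_le_right _ _
    set t : ℕ → ℝ := fun k => s₂ * (2⁻¹:ℝ) ^ k with htdef
    have ht_pos : ∀ k, 0 < t k := fun k => mul_pos hs₂pos (pow_pos (by norm_num) k)
    have ht0 : t 0 = s₂ := by simp [htdef]
    have ht_succ : ∀ k, t (k + 1) = t k * 2⁻¹ := fun k => by
      simp only [htdef, pow_succ, mul_assoc]
    set D : ℝ → Set (Fin N → ℝ) := fun s => {u | S u ≤ s} with hDdef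
    have hDmeas : ∀ s, MeasurableSet (D s) := fun s => measSet_D v a ha s
    set P0 : Set (Fin N → ℝ) := I ∩ D 0 with hP0def
    set Tl : Set (Fin N → ℝ) := I \ D (t 0) with hTldef
    set A : ℕ → Set (Fin N → ℝ) := fun k => (I ∩ D (t k)) \ D (t (k + 1)) with hAdef
    have hcov : I ⊆ (Tl ∪ P0) ∪ ⋃ k, A k := by
      intro u hu
      by_cases h0 : S u ≤ t 0
      · by_cases hz : S u ≤ 0
        · exact Or.inl (Or.inr ⟨hu, hz⟩)
        · push_neg at hz
          have hex : ∃ n, t (n + 1) < S u := by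
            obtain ⟨n, hn⟩ := exists_pow_lt_of_lt_one (div_pos hz hs₂pos) (by norm_num : (2⁻¹:ℝ) < 1)
            refine ⟨n, ?_⟩
            have h1 : t (n + 1) ≤ t n := by
              rw [ht_succ n]
              nlinarith [ht_pos n]
            have h2 : t n < S u := by
              have : s₂ * ((2⁻¹:ℝ) ^ n) < s₂ * (S u / s₂) :=
                mul_lt_mul_of_pos_left hn hs₂pos
              rw [mul_div_cancel₀ _ hs₂pos.ne'] at this
              exact this
            linarith
          have hK1 : t (Nat.find hex + 1) < S u := Nat.find_spec hex
          have hK2 : S u ≤ t (Nat.find hex) := by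
            rcases Nat.eq_zero_or_pos (Nat.find hex) with h0' | hpos
            · rw [h0']; exact h0
            · have hlt : Nat.find hex - 1 < Nat.find hex := by omega
              have hmin := Nat.find_min hex hlt
              rw [show Nat.find hex - 1 + 1 = Nat.find hex from by omega] at hmin
              exact not_lt.mp hmin
          exact Or.inr (Set.mem_iUnion.mpr ⟨Nat.find hex, ⟨⟨hu, hK2⟩, not_le.mpr hK1⟩⟩)
      · exact Or.inl (Or.inl ⟨hu, h0⟩)
    have hQ1 : (1:ℝ) ≤ Q := one_le_Q hN ha ha1
    -- piece bounds
    have hP0vol : volume P0 = 0 := by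
      have hsub : P0 ⊆ Set.Icc v v := by
        intro u hu
        have hz : ∀ l, |u l - v l| ^ a l = 0 := by
          intro l
          have h1 : |u l - v l| ^ a l ≤ 0 := by
            refine le_trans ?_ hu.2
            exact Finset.single_le_sum (f := fun i => |u i - v i| ^ a i)
              (fun i _ => Real.rpow_nonneg (abs_nonneg _) _) (mem_univ l)
          exact le_antisymm h1 (Real.rpow_nonneg (abs_nonneg _) _)
        rw [Set.mem_Icc]
        constructor <;> intro l <;>
        · have := hz l
          by_contra hc
          have habs : 0 < |u l - v l| := by
            rw [abs_pos, sub_ne_zero]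
            intro he
            exact hc (by simp [he])
          exact absurd this (Real.rpow_pos_of_pos habs _).ne'
      refine le_antisymm ?_ zero_le
      refine le_trans (measure_mono hsub) ?_
      rw [Real.volume_Icc_pi]
      refine le_of_eq (Finset.prod_eq_zero (Finset.mem_univ (⟨0, hN⟩ : Fin N)) ?_)
      simp
    have hTl : (∫⁻ u in Tl, (ENNReal.ofReal (S u)) ^ (-β))
        ≤ ENNReal.ofReal (s₂ ^ (-B)) * volume I := by
      have hmeasTl : MeasurableSet Tl := measurableSet_Icc.diff (hDmeas _)
      have hpt : ∀ u ∈ Tl, (ENNReal.ofReal (S u)) ^ (-β) ≤ ENNReal.ofReal (s₂ ^ (-B)) := by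
        intro u hu
        have h1 : s₂ ≤ S u := by
          have := hu.2
          simp only [hDdef, Set.mem_setOf_eq, ht0, not_le] at this
          exact this.le
        calc (ENNReal.ofReal (S u)) ^ (-β) ≤ (ENNReal.ofReal s₂) ^ (-β) := by
              rw [ENNReal.rpow_neg, ENNReal.rpow_neg]
              exact ENNReal.inv_le_inv.mpr
                (ENNReal.rpow_le_rpow (ENNReal.ofReal_le_ofReal h1) hβ.le)
          _ = ENNReal.ofReal (s₂ ^ (-β)) := ENNReal.ofReal_rpow_of_pos hs₂pos
          _ ≤ ENNReal.ofReal (s₂ ^ (-B)) :=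
              ENNReal.ofReal_le_ofReal
                (Real.rpow_le_rpow_of_exponent_ge hs₂pos hs₂1 (by linarith))
      calc (∫⁻ u in Tl, (ENNReal.ofReal (S u)) ^ (-β))
          ≤ ∫⁻ _u in Tl, ENNReal.ofReal (s₂ ^ (-B)) ∂volume :=
            setLIntegral_mono_on'' hmeasTl hpt
        _ = ENNReal.ofReal (s₂ ^ (-B)) * volume Tl := setLIntegral_const _ _
        _ ≤ ENNReal.ofReal (s₂ ^ (-B)) * volume I :=
            mul_le_mul_right (measure_mono Set.diff_subset) _
    have hAk : ∀ k, (∫⁻ u in A k, (ENNReal.ofReal (S u)) ^ (-β))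
        ≤ ENNReal.ofReal ((2:ℝ) ^ N * (2:ℝ) ^ B)
          * (ENNReal.ofReal ((2:ℝ) ^ (-γ))) ^ k := by
      intro k
      have hmeasA : MeasurableSet (A k) := (measurableSet_Icc.inter (hDmeas _)).diff (hDmeas _)
      have hpt : ∀ u ∈ A k, (ENNReal.ofReal (S u)) ^ (-β)
          ≤ ENNReal.ofReal (t (k + 1) ^ (-β)) := by
        intro u hu
        have h1 : t (k + 1) ≤ S u := by
          have := hu.2
          simp only [hDdef, Set.mem_setOf_eq, not_le] at this
          exact this.le
        rw [← ENNReal.ofReal_rpow_of_pos (ht_pos (k + 1)), ENNReal.rpow_neg, ENNReal.rpow_neg]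
        exact ENNReal.inv_le_inv.mpr
          (ENNReal.rpow_le_rpow (ENNReal.ofReal_le_ofReal h1) hβ.le)
      have hvolA : volume (A k) ≤ ENNReal.ofReal ((2:ℝ) ^ N * t k ^ Q) := by
        refine le_trans (measure_mono ?_) (meas_upper v a ha (ht_pos k))
        exact fun u hu => hu.1.2
      have hreal : t (k + 1) ^ (-β) * ((2:ℝ) ^ N * t k ^ Q)
          ≤ ((2:ℝ) ^ N * (2:ℝ) ^ B) * ((2:ℝ) ^ (-γ)) ^ k := by
        have e1 : t (k + 1) ^ (-β) = t k ^ (-β) * (2:ℝ) ^ β := by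
          rw [ht_succ k, Real.mul_rpow (ht_pos k).le (by norm_num),
            Real.inv_rpow (by norm_num : (0:ℝ) ≤ 2), ← Real.rpow_neg (by norm_num : (0:ℝ) ≤ 2),
            neg_neg]
        have e2 : t k ^ (-β) * t k ^ Q = t k ^ γ := by
          rw [← Real.rpow_add (ht_pos k), hγdef]; ring_nf
        have e3 : t k ^ γ ≤ ((2:ℝ) ^ (-γ)) ^ k := by
          rw [htdef]
          rw [Real.mul_rpow hs₂pos.le (pow_nonneg (by norm_num) k)]
          have h4 : s₂ ^ γ ≤ 1 := Real.rpow_le_one hs₂pos.le hs₂1 hγpos.le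
          have h5 : ((2⁻¹:ℝ) ^ k) ^ γ = ((2:ℝ) ^ (-γ)) ^ k := by
            rw [← Real.rpow_natCast (2⁻¹:ℝ) k, ← Real.rpow_natCast ((2:ℝ) ^ (-γ)) k,
              ← Real.rpow_mul (by norm_num : (0:ℝ) ≤ 2⁻¹),
              Real.inv_rpow (by norm_num : (0:ℝ) ≤ 2), ← Real.rpow_neg (by norm_num : (0:ℝ) ≤ 2),
              ← Real.rpow_mul (by norm_num : (0:ℝ) ≤ 2)]
            congr 1
            ring
          rw [← h5]
          nlinarith [Real.rpow_nonneg (pow_nonneg (by norm_num : (0:ℝ) ≤ 2⁻¹) k) γ]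
        have h2β : (2:ℝ) ^ β ≤ (2:ℝ) ^ B :=
          Real.rpow_le_rpow_of_exponent_le one_le_two (by linarith)
        have hnn1 : (0:ℝ) ≤ t k ^ (-β) := Real.rpow_nonneg (ht_pos k).le _
        have hnn2 : (0:ℝ) < (2:ℝ) ^ N := by positivity
        have hnn3 : (0:ℝ) ≤ (2:ℝ) ^ β := Real.rpow_nonneg (by norm_num) _
        calc t (k + 1) ^ (-β) * ((2:ℝ) ^ N * t k ^ Q)
            = (2:ℝ) ^ N * (2:ℝ) ^ β * (t k ^ (-β) * t k ^ Q) := by rw [e1]; ring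
          _ = (2:ℝ) ^ N * (2:ℝ) ^ β * t k ^ γ := by rw [e2]
          _ ≤ (2:ℝ) ^ N * (2:ℝ) ^ B * ((2:ℝ) ^ (-γ)) ^ k := by
              have hγnn : (0:ℝ) ≤ t k ^ γ := Real.rpow_nonneg (ht_pos k).le _
              have h2Bnn : (0:ℝ) ≤ (2:ℝ) ^ B := Real.rpow_nonneg (by norm_num) _
              have hkey := mul_le_mul h2β e3 hγnn h2Bnn
              rw [mul_assoc, mul_assoc]
              exact mul_le_mul_of_nonneg_left hkey hnn2.le
      calc (∫⁻ u in A k, (ENNReal.ofReal (S u)) ^ (-β))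
          ≤ ∫⁻ _u in A k, ENNReal.ofReal (t (k + 1) ^ (-β)) ∂volume :=
            setLIntegral_mono_on'' hmeasA hpt
        _ = ENNReal.ofReal (t (k + 1) ^ (-β)) * volume (A k) := setLIntegral_const _ _
        _ ≤ ENNReal.ofReal (t (k + 1) ^ (-β)) * ENNReal.ofReal ((2:ℝ) ^ N * t k ^ Q) :=
            mul_le_mul_right hvolA _
        _ = ENNReal.ofReal (t (k + 1) ^ (-β) * ((2:ℝ) ^ N * t k ^ Q)) :=
            (ENNReal.ofReal_mul (Real.rpow_nonneg (ht_pos (k + 1)).le _)).symm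
        _ ≤ ENNReal.ofReal (((2:ℝ) ^ N * (2:ℝ) ^ B) * ((2:ℝ) ^ (-γ)) ^ k) :=
            ENNReal.ofReal_le_ofReal hreal
        _ = ENNReal.ofReal ((2:ℝ) ^ N * (2:ℝ) ^ B)
            * (ENNReal.ofReal ((2:ℝ) ^ (-γ))) ^ k := by
            rw [ENNReal.ofReal_mul (by positivity),
              ENNReal.ofReal_pow (Real.rpow_nonneg (by norm_num) _)]
    -- assemble
    have hsum : (∑' k, ∫⁻ u in A k, (ENNReal.ofReal (S u)) ^ (-β))
        ≤ ENNReal.ofReal ((2:ℝ) ^ N * (2:ℝ) ^ B) * (4 * (1 + (ENNReal.ofReal γ)⁻¹)) := by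
      calc (∑' k, ∫⁻ u in A k, (ENNReal.ofReal (S u)) ^ (-β))
          ≤ ∑' k, ENNReal.ofReal ((2:ℝ) ^ N * (2:ℝ) ^ B)
              * (ENNReal.ofReal ((2:ℝ) ^ (-γ))) ^ k := ENNReal.tsum_le_tsum hAk
        _ = ENNReal.ofReal ((2:ℝ) ^ N * (2:ℝ) ^ B)
              * ∑' k, (ENNReal.ofReal ((2:ℝ) ^ (-γ))) ^ k := ENNReal.tsum_mul_left
        _ ≤ ENNReal.ofReal ((2:ℝ) ^ N * (2:ℝ) ^ B) * (4 * (1 + (ENNReal.ofReal γ)⁻¹)) := by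
            refine mul_le_mul_right ?_ _
            rw [ENNReal.tsum_geometric]
            have : (1:ℝ≥0∞) - ENNReal.ofReal ((2:ℝ) ^ (-γ))
                = ENNReal.ofReal (1 - (2:ℝ) ^ (-γ)) := by
              rw [ENNReal.ofReal_sub _ (Real.rpow_nonneg (by norm_num) _), ENNReal.ofReal_one]
            rw [this]
            exact geom_bound hγpos
    calc (∫⁻ u in I, (ENNReal.ofReal (S u)) ^ (-β))
        ≤ ∫⁻ u in (Tl ∪ P0) ∪ ⋃ k, A k, (ENNReal.ofReal (S u)) ^ (-β) :=
          lintegral_mono_set hcov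
      _ ≤ (∫⁻ u in Tl ∪ P0, (ENNReal.ofReal (S u)) ^ (-β))
          + ∑' k, ∫⁻ u in A k, (ENNReal.ofReal (S u)) ^ (-β) := by
          refine le_trans (lintegral_union_le _ _ _) ?_
          exact add_le_add_right (lintegral_iUnion_le _ _) _
      _ ≤ ((∫⁻ u in Tl, (ENNReal.ofReal (S u)) ^ (-β))
            + ∫⁻ u in P0, (ENNReal.ofReal (S u)) ^ (-β))
          + ∑' k, ∫⁻ u in A k, (ENNReal.ofReal (S u)) ^ (-β) := by
          exact add_le_add_left (lintegral_union_le _ _ _) _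
      _ ≤ (ENNReal.ofReal (s₂ ^ (-B)) * volume I + 0)
          + ENNReal.ofReal ((2:ℝ) ^ N * (2:ℝ) ^ B) * (4 * (1 + (ENNReal.ofReal γ)⁻¹)) := by
          refine add_le_add (add_le_add hTl ?_) hsum
          rw [setLIntegral_measure_zero _ _ hP0vol]
      _ ≤ CA N ε T B * (1 + (ENNReal.ofReal γ)⁻¹) := by
          rw [add_zero]
          set E : ℝ≥0∞ := 1 + (ENNReal.ofReal γ)⁻¹ with hEdef
          set Ca1 : ℝ≥0∞ := (ENNReal.ofReal ((max ((N:ℝ) * max (T - ε) 1) 1) ^ B)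
            + ENNReal.ofReal ((min (T - ε) 1) ^ (-B))) * volume I with hCa1def
          set Ca2 : ℝ≥0∞ := 4 * ENNReal.ofReal ((2:ℝ) ^ N * (2:ℝ) ^ B) with hCa2def
          have hCAeq : CA N ε T B = Ca1 + Ca2 := rfl
          have h1 : ENNReal.ofReal (s₂ ^ (-B)) * volume I ≤ Ca1 * E := by
            calc ENNReal.ofReal (s₂ ^ (-B)) * volume I ≤ Ca1 := by
                  rw [hCa1def]; exact mul_le_mul_left le_add_self _
              _ = Ca1 * 1 := (mul_one _).symm
              _ ≤ Ca1 * E := mul_le_mul_right hγinv _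
          have h2 : ENNReal.ofReal ((2:ℝ) ^ N * (2:ℝ) ^ B) * (4 * E) = Ca2 * E := by
            rw [hCa2def]; ring
          calc ENNReal.ofReal (s₂ ^ (-B)) * volume I
                + ENNReal.ofReal ((2:ℝ) ^ N * (2:ℝ) ^ B) * (4 * E)
              ≤ Ca1 * E + Ca2 * E := by rw [h2]; exact add_le_add_left h1 _
            _ = (Ca1 + Ca2) * E := (add_mul _ _ _).symm
            _ = CA N ε T B * E := by rw [hCAeq]


section Main

lemma CB_lt_top {N : ℕ} (hN : 1 ≤ N) {ε T : ℝ} (hεT : ε < T) (Qb : ℝ) :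
    CB N ε T Qb < ⊤ := by
  have hN0 : (0:ℝ) < N := by exact_mod_cast hN
  have hδ : (0:ℝ) < min ((T - ε) / 2) 1 := lt_min (by linarith) one_pos
  have hr : (0:ℝ) < (N:ℝ) * 2 ^ (N + 1) := by positivity
  have harg : (0:ℝ) < ((N:ℝ) * 2 ^ (N + 1)) ^ (-(Qb + 1))
      * min ((N:ℝ) * min ((T - ε) / 2) 1) 1 :=
    mul_pos (Real.rpow_pos_of_pos hr _) (lt_min (mul_pos hN0 hδ) one_pos)
  refine ENNReal.add_lt_top.mpr ⟨?_, ENNReal.one_lt_top⟩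
  exact ENNReal.inv_lt_top.mpr (ENNReal.ofReal_pos.mpr harg)

end Main

end LMSSAux


open LMSSAux

/-- Equation (2.14): the integral-finiteness equivalence that is the analytic core of
the existence criterion for local times of LMSS. All integrals are Lebesgue integrals
with values in `[0,∞]`; the conventions `0^{-a} = ∞` (`a > 0`) and `0⁻¹ = ∞` are
realized by `ENNReal` arithmetic. -/
theorem integral_finiteness_equivalence (N : ℕ) (hN : 1 ≤ N) (ε T : ℝ)
    (hε : 0 < ε) (hεT : ε < T)
    (h : Fin N → (Fin N → ℝ) → ℝ) (θ : (Fin N → ℝ) → ℝ) (m M : Fin N → ℝ)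
    (hm : ∀ l, 0 < m l) (hM1 : ∀ l, M l < 1)
    (hh : ∀ l, ∀ v ∈ Set.Icc (fun _ : Fin N => ε) (fun _ => T),
      m l ≤ h l v ∧ h l v ≤ M l)
    (hhcont : ∀ l, ContinuousOn (h l) (Set.Icc (fun _ : Fin N => ε) (fun _ => T)))
    (hθcont : ContinuousOn θ (Set.Icc (fun _ : Fin N => ε) (fun _ => T))) :
    (∫⁻ v in Set.Icc (fun _ : Fin N => ε) (fun _ => T),
        ∫⁻ u in Set.Icc (fun _ : Fin N => ε) (fun _ => T),
          (ENNReal.ofReal (∑ l, |u l - v l| ^ h l v)) ^ (-θ v)) < ⊤ ↔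
      ((∀ v ∈ Set.Icc (fun _ : Fin N => ε) (fun _ => T), θ v ≤ ∑ l, 1 / h l v) ∧
        (∫⁻ v in Set.Icc (fun _ : Fin N => ε) (fun _ => T),
          (ENNReal.ofReal (∑ l, 1 / h l v - θ v))⁻¹) < ⊤) := by
  set I : Set (Fin N → ℝ) := Set.Icc (fun _ : Fin N => ε) (fun _ => T) with hIdef
  have hImeas : MeasurableSet I := measurableSet_Icc
  have hIfin : volume I < ⊤ := isCompact_Icc.measure_lt_top
  -- basic facts about h on I
  have hhpos : ∀ v ∈ I, ∀ l, 0 < h l v := fun v hv l => lt_of_lt_of_le (hm l) (hh l v hv).1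
  have hhone : ∀ v ∈ I, ∀ l, h l v ≤ 1 := fun v hv l =>
    ((hh l v hv).2.trans_lt (hM1 l)).le
  -- bound on θ
  obtain ⟨B0, hB0⟩ := isCompact_Icc.exists_bound_of_continuousOn hθcont
  set B : ℝ := max B0 0 with hBdef
  have hB : 0 ≤ B := le_max_right _ _
  have hθB : ∀ v ∈ I, |θ v| ≤ B := fun v hv => le_trans (hB0 v hv) (le_max_left _ _)
  -- bound on Q
  set Qb : ℝ := ∑ l, 1 / m l with hQbdef
  have hQb : ∀ v ∈ I, ∑ l, 1 / h l v ≤ Qb := by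
    intro v hv
    exact Finset.sum_le_sum fun l _ => one_div_le_one_div_of_le (hm l) (hh l v hv).1
  -- the inner integral
  set J : (Fin N → ℝ) → ℝ≥0∞ := fun v => ∫⁻ u in I,
    (ENNReal.ofReal (∑ l, |u l - v l| ^ h l v)) ^ (-θ v) with hJdef
  set g : (Fin N → ℝ) → ℝ≥0∞ := fun v =>
    (ENNReal.ofReal (∑ l, 1 / h l v - θ v))⁻¹ with hgdef
  -- continuity of Q - θ
  set f : (Fin N → ℝ) → ℝ := fun v => (∑ l, 1 / h l v) - θ v with hfdef
  have hfc : ContinuousOn f I := by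
    refine ContinuousOn.sub ?_ hθcont
    refine continuousOn_finset_sum _ fun l _ => ?_
    exact continuousOn_const.div (hhcont l) (fun v hv => (hhpos v hv l).ne')
  have hgf : ∀ v, g v = (ENNReal.ofReal (f v))⁻¹ := fun v => rfl
  -- pointwise lemmas specialised
  have hlow : ∀ v ∈ I, g v ≤ CB N ε T Qb * (J v + 1) := by
    intro v hv
    exact lower_main hN hεT hv (hhpos v hv) (hhone v hv) (hQb v hv) (θ v)
  have hupp : ∀ v ∈ I, θ v < ∑ l, 1 / h l v →
      J v ≤ CA N ε T B * (1 + g v) := by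
    intro v hv hvQ
    exact upper_main hN hεT hB hv (hhpos v hv) (hhone v hv) (hθB v hv) hvQ
  have hCBtop : CB N ε T Qb < ⊤ := CB_lt_top hN hεT Qb
  have hCAtop : CA N ε T B < ⊤ := CA_lt_top N ε T B
  constructor
  · intro hint
    have hcond_a : ∀ v ∈ I, θ v ≤ ∑ l, 1 / h l v := by
      intro v₀ hv₀
      by_contra hcon
      push_neg at hcon
      have hfneg : f v₀ < 0 := by simp only [hfdef]; linarith
      -- find an open set U around v₀ on which f < 0 (within I)
      have hcwa : ContinuousWithinAt f I v₀ := hfc v₀ hv₀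
      have hmem : f ⁻¹' Set.Iio 0 ∈ nhdsWithin v₀ I := hcwa (Iio_mem_nhds hfneg)
      obtain ⟨U, hUopen, hv₀U, hUsub⟩ := mem_nhdsWithin.mp hmem
      -- the open box
      set O : Set (Fin N → ℝ) := Set.pi Set.univ (fun _ : Fin N => Set.Ioo ε T) with hOdef
      have hOopen : IsOpen O := isOpen_set_pi Set.finite_univ (fun _ _ => isOpen_Ioo)
      have hOI : O ⊆ I := by
        intro u hu
        rw [hIdef, Set.mem_Icc]
        constructor <;> intro l <;> have := hu l (Set.mem_univ l)
        · exact (this.1).le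
        · exact (this.2).le
      -- find a point of U ∩ O
      set c : ℝ := (ε + T) / 2 with hcdef
      set p : ℝ → (Fin N → ℝ) := fun t => fun l => v₀ l + t * (c - v₀ l) with hpdef
      have hpcont : Continuous p := by
        refine continuous_pi fun l => ?_
        exact continuous_const.add (continuous_id.mul continuous_const)
      have hp0 : p 0 = v₀ := by funext l; simp [hpdef]
      have hev : ∀ᶠ t in nhds (0:ℝ), p t ∈ U := by
        have := hpcont.continuousAt (x := (0:ℝ))
        have h2 : U ∈ nhds (p 0) := hUopen.mem_nhds (by rw [hp0]; exact hv₀U)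
        exact this h2
      have hev2 : ∀ᶠ t in nhdsWithin (0:ℝ) (Set.Ioi 0), p t ∈ U ∧ t < 1 := by
        refine Filter.Eventually.and ?_ ?_
        · exact hev.filter_mono nhdsWithin_le_nhds
        · exact Filter.Eventually.filter_mono nhdsWithin_le_nhds (Filter.Tendsto.eventually_lt_const one_pos Filter.tendsto_id)
      have hev3 : ∀ᶠ t in nhdsWithin (0:ℝ) (Set.Ioi 0),
          (p t ∈ U ∧ t < 1) ∧ t ∈ Set.Ioi 0 := hev2.and eventually_mem_nhdsWithin
      obtain ⟨t, ⟨htU, ht1⟩, htpos⟩ := hev3.exists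
      rw [Set.mem_Ioi] at htpos
      have htO : p t ∈ O := by
        intro l _
        rw [hIdef, Set.mem_Icc] at hv₀
        have h1 : ε ≤ v₀ l := hv₀.1 l
        have h2 : v₀ l ≤ T := hv₀.2 l
        have h3 : ε < c := by rw [hcdef]; linarith
        have h4 : c < T := by rw [hcdef]; linarith
        have e1 : v₀ l + t * (c - v₀ l) - ε = (1 - t) * (v₀ l - ε) + t * (c - ε) := by ring
        have e2 : T - (v₀ l + t * (c - v₀ l)) = (1 - t) * (T - v₀ l) + t * (T - c) := by ring
        constructor
        · have q1 : 0 ≤ (1 - t) * (v₀ l - ε) := mul_nonneg (by linarith) (by linarith)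
          have q2 : 0 < t * (c - ε) := mul_pos htpos (by linarith)
          simp only [hpdef]
          linarith [e1]
        · have q1 : 0 ≤ (1 - t) * (T - v₀ l) := mul_nonneg (by linarith) (by linarith)
          have q2 : 0 < t * (T - c) := mul_pos htpos (by linarith)
          simp only [hpdef]
          linarith [e2]
      have hμpos : 0 < volume (U ∩ O) :=
        (hUopen.inter hOopen).measure_pos volume ⟨p t, htU, htO⟩
      have hJtop : ∀ v ∈ U ∩ O, J v = ⊤ := by
        intro v hvUO
        have hvI : v ∈ I := hOI hvUO.2
        have hfv : f v < 0 := hUsub ⟨hvUO.1, hvI⟩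
        have hgv : g v = ⊤ := by
          rw [hgf, show ENNReal.ofReal (f v) = 0 from ENNReal.ofReal_eq_zero.mpr hfv.le,
            ENNReal.inv_zero]
        by_contra hJv
        have hlt : CB N ε T Qb * (J v + 1) < ⊤ :=
          ENNReal.mul_lt_top hCBtop
            (ENNReal.add_lt_top.mpr ⟨lt_top_iff_ne_top.mpr hJv, ENNReal.one_lt_top⟩)
        have := hlow v hvI
        rw [hgv] at this
        exact absurd (lt_of_le_of_lt this hlt) (lt_irrefl _)
      have htop : (⊤:ℝ≥0∞) ≤ ∫⁻ v in I, J v := by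
        calc (⊤:ℝ≥0∞) = ⊤ * volume (U ∩ O) := (ENNReal.top_mul hμpos.ne').symm
          _ = ∫⁻ _v in U ∩ O, ⊤ ∂volume := (setLIntegral_const _ _).symm
          _ ≤ ∫⁻ v in U ∩ O, J v :=
              setLIntegral_mono_on'' (hUopen.inter hOopen).measurableSet
                (fun v hv => (hJtop v hv).ge)
          _ ≤ ∫⁻ v in I, J v := lintegral_mono_set (fun v hv => hOI hv.2)
      exact absurd (lt_of_le_of_lt htop hint) (lt_irrefl _)
    refine ⟨hcond_a, ?_⟩
    calc (∫⁻ v in I, g v) ≤ ∫⁻ v in I, CB N ε T Qb * (J v + 1) :=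
          setLIntegral_mono_on'' hImeas hlow
      _ = CB N ε T Qb * ∫⁻ v in I, (J v + 1) := lintegral_const_mul' _ _ hCBtop.ne
      _ = CB N ε T Qb * ((∫⁻ v in I, J v) + volume I) := by
          rw [lintegral_add_right _ measurable_const, setLIntegral_const, one_mul]
      _ < ⊤ := ENNReal.mul_lt_top hCBtop (ENNReal.add_lt_top.mpr ⟨hint, hIfin⟩)
  · rintro ⟨ha', hb'⟩
    set Z : Set (Fin N → ℝ) := I ∩ f ⁻¹' Set.Iic 0 with hZdef
    have hZmeas : MeasurableSet Z :=
      (hfc.preimage_isClosed_of_isClosed isClosed_Icc isClosed_Iic).measurableSet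
    have hZ0 : volume Z = 0 := by
      by_contra hz
      have htop : (⊤:ℝ≥0∞) ≤ ∫⁻ v in I, g v := by
        calc (⊤:ℝ≥0∞) = ⊤ * volume Z := (ENNReal.top_mul hz).symm
          _ = ∫⁻ _v in Z, ⊤ ∂volume := (setLIntegral_const _ _).symm
          _ ≤ ∫⁻ v in Z, g v := by
              refine setLIntegral_mono_on'' hZmeas fun v hv => ?_
              have : ENNReal.ofReal (f v) = 0 := ENNReal.ofReal_eq_zero.mpr hv.2
              rw [hgf, this, ENNReal.inv_zero]
          _ ≤ ∫⁻ v in I, g v := lintegral_mono_set Set.inter_subset_left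
      exact absurd (lt_of_le_of_lt htop hb') (lt_irrefl _)
    have hae : ∀ᵐ v ∂(volume.restrict I), J v ≤ CA N ε T B * (1 + g v) := by
      have h1 : ∀ᵐ v ∂(volume.restrict I), v ∈ I := ae_restrict_mem hImeas
      have h2 : ∀ᵐ v ∂(volume.restrict I), v ∉ Z := by
        have h3 : ∀ᵐ v ∂(volume : Measure (Fin N → ℝ)), v ∉ Z :=
          measure_eq_zero_iff_ae_notMem.mp hZ0
        exact h3.filter_mono (ae_mono Measure.restrict_le_self)
      filter_upwards [h1, h2] with v hvI hvZ
      refine hupp v hvI ?_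
      have hfv : ¬ (f v ≤ 0) := fun hc => hvZ ⟨hvI, hc⟩
      push_neg at hfv
      simp only [hfdef] at hfv
      linarith
    calc (∫⁻ v in I, J v) ≤ ∫⁻ v in I, CA N ε T B * (1 + g v) := lintegral_mono_ae hae
      _ = CA N ε T B * ∫⁻ v in I, (1 + g v) := lintegral_const_mul' _ _ hCAtop.ne
      _ = CA N ε T B * (volume I + ∫⁻ v in I, g v) := by
          rw [lintegral_add_left measurable_const, setLIntegral_const, one_mul]
      _ < ⊤ := ENNReal.mul_lt_top hCAtop (ENNReal.add_lt_top.mpr ⟨hIfin, hb'⟩)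
end

section
/- Let 0 < ε < T, I := [ε,T]^N, let h₁ : I → ℝ be continuous with 0 < m₁ ≤ h₁(v) ≤ M₁ < 1 for all v ∈ I, and let θ : I → ℝ be continuous. Then ∫_I ∫_ε^T |t − v₁|^{−θ(v)·h₁(v)} dt dv < ∞ (where v₁ denotes the first coordinate of v) if and only if both of the following hold: (a) θ(v) ≤ 1/h₁(v) for every v ∈ I, and (b) ∫_I (1/h₁(v) − θ(v))^{−1} dv < ∞. -/
/-!
Fix `v` in the cube and put `c = v₁`, `a = θ(v) h₁(v)`. The inner integral equals
`((c - ε)^(1-a) + (T - c)^(1-a)) / (1 - a)` if `a < 1` and `∞` otherwise, while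
`(1/h₁(v) - θ(v))⁻¹ = h₁(v) / (1 - a)`, resp. `∞`. As `θ` is bounded on the compact cube and
`m₁ ≤ h₁ ≤ 1`, the exponent `1 - a` ranges in a bounded interval, so the two integrands are
comparable with constants independent of `v`; this is the equivalence with (b). Finiteness in (b)
makes `1/h₁ - θ` positive almost everywhere on the cube, hence nonnegative everywhere by
continuity, which is (a).
-/

open MeasureTheory Set
open scoped ENNReal

theorem lintegral_Icc_abs_sub {a b c : ℝ} (hc : c ∈ Icc a b) (f : ℝ → ℝ≥0∞) :
    ∫⁻ t in Icc a b, f |t - c| = (∫⁻ s in Icc 0 (c - a), f s) + ∫⁻ s in Ioc 0 (b - c), f s := by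
  rw [← Icc_union_Ioc_eq_Icc hc.1 hc.2,
    lintegral_union measurableSet_Ioc ((Iic_disjoint_Ioc le_rfl).mono_left Icc_subset_Iic_self)]
  congr 1
  · have h := (Measure.measurePreserving_sub_left volume c).setLIntegral_comp_preimage_emb
      (MeasurableEquiv.subLeft c).measurableEmbedding f (Icc 0 (c - a))
    rw [preimage_const_sub_Icc, sub_sub_cancel, sub_zero] at h
    refine (setLIntegral_congr_fun measurableSet_Icc fun t ht => ?_).trans h
    rw [abs_sub_comm, abs_of_nonneg (sub_nonneg.2 ht.2)]
  · have h := (measurePreserving_sub_right volume c).setLIntegral_comp_preimage_emb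
      (MeasurableEquiv.subRight c).measurableEmbedding f (Ioc 0 (b - c))
    rw [preimage_sub_const_Ioc, zero_add, sub_add_cancel] at h
    refine (setLIntegral_congr_fun measurableSet_Ioc fun t ht => ?_).trans h
    rw [abs_of_nonneg (sub_nonneg.2 ht.1.le)]

theorem lintegral_Ioc_zero_rpow_neg_of_lt_one {ℓ a : ℝ} (hℓ : 0 ≤ ℓ) (ha : a < 1) :
    ∫⁻ s in Ioc 0 ℓ, ENNReal.ofReal s ^ (-a) = ENNReal.ofReal (ℓ ^ (1 - a) / (1 - a)) := by
  have hint : IntegrableOn (fun s : ℝ => s ^ (-a)) (Ioc 0 ℓ) :=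
    (intervalIntegral.intervalIntegrable_rpow' (by linarith)).1
  rw [setLIntegral_congr_fun measurableSet_Ioc fun s hs => ENNReal.ofReal_rpow_of_pos hs.1,
    ← ofReal_integral_eq_lintegral_ofReal hint
      (ae_restrict_of_forall_mem measurableSet_Ioc fun s hs => Real.rpow_nonneg hs.1.le _),
    ← intervalIntegral.integral_of_le hℓ, integral_rpow (Or.inl (by linarith)),
    Real.zero_rpow (by linarith), sub_zero, neg_add_eq_sub]

theorem lintegral_Ioc_zero_rpow_neg_of_one_le {ℓ a : ℝ} (hℓ : 0 < ℓ) (ha : 1 ≤ a) :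
    ∫⁻ s in Ioc 0 ℓ, ENNReal.ofReal s ^ (-a) = ∞ := by
  by_contra hfin
  rw [setLIntegral_congr_fun measurableSet_Ioc fun s hs => ENNReal.ofReal_rpow_of_pos hs.1] at hfin
  have hint : IntegrableOn (fun s : ℝ => s ^ (-a)) (Ioc 0 ℓ) := by
    refine ⟨(continuousOn_id.rpow_const fun s hs => Or.inl hs.1.ne').aestronglyMeasurable
      measurableSet_Ioc, ?_⟩
    rw [hasFiniteIntegral_iff_ofReal
      (ae_restrict_of_forall_mem measurableSet_Ioc fun s hs => Real.rpow_nonneg hs.1.le _)]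
    exact lt_top_iff_ne_top.2 hfin
  rw [integrableOn_Ioc_iff_integrableOn_Ioo, intervalIntegral.integrableOn_Ioo_rpow_iff hℓ] at hint
  linarith

theorem lintegral_Icc_abs_sub_rpow_neg_of_lt_one {ε T c a : ℝ} (hc : c ∈ Icc ε T) (ha : a < 1) :
    ∫⁻ t in Icc ε T, ENNReal.ofReal |t - c| ^ (-a) =
      ENNReal.ofReal (((c - ε) ^ (1 - a) + (T - c) ^ (1 - a)) / (1 - a)) := by
  have h₁ : 0 ≤ c - ε := sub_nonneg.2 hc.1
  have h₂ : 0 ≤ T - c := sub_nonneg.2 hc.2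
  have ha' : 0 < 1 - a := sub_pos.2 ha
  rw [lintegral_Icc_abs_sub hc fun s => ENNReal.ofReal s ^ (-a),
    setLIntegral_congr Ioc_ae_eq_Icc.symm,
    lintegral_Ioc_zero_rpow_neg_of_lt_one h₁ ha, lintegral_Ioc_zero_rpow_neg_of_lt_one h₂ ha,
    ← ENNReal.ofReal_add (by positivity) (by positivity), add_div]

theorem lintegral_Icc_abs_sub_rpow_neg_of_one_le {ε T c a : ℝ} (hεT : ε < T) (hc : c ∈ Icc ε T)
    (ha : 1 ≤ a) : ∫⁻ t in Icc ε T, ENNReal.ofReal |t - c| ^ (-a) = ∞ := by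
  rw [lintegral_Icc_abs_sub hc fun s => ENNReal.ofReal s ^ (-a),
    setLIntegral_congr Ioc_ae_eq_Icc.symm]
  rcases lt_or_ge ε c with h | h
  · simp [lintegral_Ioc_zero_rpow_neg_of_one_le (sub_pos.2 h) ha]
  · simp [lintegral_Ioc_zero_rpow_neg_of_one_le (sub_pos.2 (h.trans_lt hεT)) ha]

theorem Real.min_one_rpow_le_rpow {x p P : ℝ} (hx : 0 < x) (hp : 0 ≤ p) (hpP : p ≤ P) :
    min 1 (x ^ P) ≤ x ^ p := by
  rcases le_total x 1 with h | h
  · exact (min_le_right _ _).trans (Real.rpow_le_rpow_of_exponent_ge hx h hpP)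
  · exact (min_le_left _ _).trans (Real.one_le_rpow h hp)

theorem Real.rpow_le_max_one_rpow {x p P : ℝ} (hx : 0 ≤ x) (hp : 0 ≤ p) (hpP : p ≤ P) :
    x ^ p ≤ max 1 (x ^ P) := by
  rcases le_total x 1 with h | h
  · exact le_max_of_le_left (Real.rpow_le_one hx h hp)
  · exact le_max_of_le_right (Real.rpow_le_rpow_of_exponent_le h hpP)

theorem min_one_half_sub_rpow_le_rpow_add_rpow {ε T c p P : ℝ} (hεT : ε < T) (hc : c ∈ Icc ε T)
    (hp : 0 ≤ p) (hpP : p ≤ P) :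
    min 1 (((T - ε) / 2) ^ P) ≤ (c - ε) ^ p + (T - c) ^ p := by
  have hmid := Real.min_one_rpow_le_rpow (half_pos (sub_pos.2 hεT)) hp hpP
  have h₁ : 0 ≤ (c - ε) ^ p := Real.rpow_nonneg (sub_nonneg.2 hc.1) p
  have h₂ : 0 ≤ (T - c) ^ p := Real.rpow_nonneg (sub_nonneg.2 hc.2) p
  rcases le_total c ((ε + T) / 2) with h | h
  · have := Real.rpow_le_rpow (by linarith) (show (T - ε) / 2 ≤ T - c by linarith) hp
    linarith
  · have := Real.rpow_le_rpow (by linarith) (show (T - ε) / 2 ≤ c - ε by linarith) hp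
    linarith

theorem rpow_add_rpow_le_two_mul_max_one_rpow {ε T c p P : ℝ} (hc : c ∈ Icc ε T) (hp : 0 ≤ p)
    (hpP : p ≤ P) : (c - ε) ^ p + (T - c) ^ p ≤ 2 * max 1 ((T - ε) ^ P) := by
  have hlen := Real.rpow_le_max_one_rpow (sub_nonneg.2 (hc.1.trans hc.2)) hp hpP
  have h₁ := Real.rpow_le_rpow (sub_nonneg.2 hc.1) (show c - ε ≤ T - ε by linarith [hc.2]) hp
  have h₂ := Real.rpow_le_rpow (sub_nonneg.2 hc.2) (show T - c ≤ T - ε by linarith [hc.1]) hp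
  linarith

theorem inv_ofReal_inv_sub_of_mul_lt_one {h θ : ℝ} (hh : 0 < h) (hθ : θ * h < 1) :
    (ENNReal.ofReal (1 / h - θ))⁻¹ = ENNReal.ofReal (h / (1 - θ * h)) := by
  have hsub : 1 / h - θ = (1 - θ * h) / h := by field_simp
  rw [hsub, ← ENNReal.ofReal_inv_of_pos (div_pos (sub_pos.2 hθ) hh), inv_div]

theorem inv_ofReal_inv_sub_of_one_le_mul {h θ : ℝ} (hh : 0 < h) (hθ : 1 ≤ θ * h) :
    (ENNReal.ofReal (1 / h - θ))⁻¹ = ∞ := by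
  have hsub : 1 / h - θ = (1 - θ * h) / h := by field_simp
  rw [hsub, ENNReal.ofReal_of_nonpos (div_nonpos_of_nonpos_of_nonneg (by linarith) hh.le),
    ENNReal.inv_zero]

theorem ofReal_mul_inv_ofReal_inv_sub_le_lintegral {ε T c h θ P : ℝ} (hεT : ε < T)
    (hc : c ∈ Icc ε T) (hh : 0 < h) (hh1 : h ≤ 1) (hP : 1 - θ * h ≤ P) :
    ENNReal.ofReal (min 1 (((T - ε) / 2) ^ P)) * (ENNReal.ofReal (1 / h - θ))⁻¹ ≤
      ∫⁻ t in Icc ε T, ENNReal.ofReal |t - c| ^ (-(θ * h)) := by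
  rcases lt_or_ge (θ * h) 1 with hθ | hθ
  · have hp : 0 < 1 - θ * h := sub_pos.2 hθ
    have hS := min_one_half_sub_rpow_le_rpow_add_rpow hεT hc hp.le hP
    have hc₀ : 0 ≤ min 1 (((T - ε) / 2) ^ P) :=
      le_min zero_le_one (Real.rpow_nonneg (by linarith) P)
    rw [lintegral_Icc_abs_sub_rpow_neg_of_lt_one hc hθ, inv_ofReal_inv_sub_of_mul_lt_one hh hθ,
      ← ENNReal.ofReal_mul hc₀, mul_div_assoc']
    gcongr
    exact (mul_le_of_le_one_right hc₀ hh1).trans hS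
  · rw [lintegral_Icc_abs_sub_rpow_neg_of_one_le hεT hc hθ]
    exact le_top

theorem lintegral_le_ofReal_mul_inv_ofReal_inv_sub {ε T c h θ m P : ℝ}
    (hc : c ∈ Icc ε T) (hm : 0 < m) (hmh : m ≤ h) (hP : 1 - θ * h ≤ P) :
    ∫⁻ t in Icc ε T, ENNReal.ofReal |t - c| ^ (-(θ * h)) ≤
      ENNReal.ofReal (2 * max 1 ((T - ε) ^ P) / m) * (ENNReal.ofReal (1 / h - θ))⁻¹ := by
  have hh : 0 < h := hm.trans_le hmh
  have hC : 0 < 2 * max 1 ((T - ε) ^ P) / m := by positivity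
  rcases lt_or_ge (θ * h) 1 with hθ | hθ
  · have hp : 0 < 1 - θ * h := sub_pos.2 hθ
    have hS := rpow_add_rpow_le_two_mul_max_one_rpow hc hp.le hP
    rw [lintegral_Icc_abs_sub_rpow_neg_of_lt_one hc hθ, inv_ofReal_inv_sub_of_mul_lt_one hh hθ,
      ← ENNReal.ofReal_mul hC.le, mul_div_assoc']
    gcongr
    calc _ ≤ 2 * max 1 ((T - ε) ^ P) := hS
      _ = 2 * max 1 ((T - ε) ^ P) / m * m := (div_mul_cancel₀ _ hm.ne').symm
      _ ≤ _ := by gcongr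
  · rw [inv_ofReal_inv_sub_of_one_le_mul hh hθ, ENNReal.mul_top (ENNReal.ofReal_pos.2 hC).ne']
    exact le_top

theorem lintegral_lt_top_iff_of_ae_le_mul {α : Type*} [MeasurableSpace α] {μ : Measure α}
    {f g : α → ℝ≥0∞} {c C : ℝ≥0∞} (hc : c ≠ 0) (hC : C ≠ ∞)
    (hlow : ∀ᵐ x ∂μ, c * g x ≤ f x) (hup : ∀ᵐ x ∂μ, f x ≤ C * g x) :
    ∫⁻ x, f x ∂μ < ∞ ↔ ∫⁻ x, g x ∂μ < ∞ := by
  refine ⟨fun hf => ENNReal.lt_top_of_mul_ne_top_right ?_ hc, fun hg => ?_⟩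
  · exact ((lintegral_const_mul_le c g).trans (lintegral_mono_ae hlow)).trans_lt hf |>.ne
  · calc ∫⁻ x, f x ∂μ ≤ ∫⁻ x, C * g x ∂μ := lintegral_mono_ae hup
      _ = C * ∫⁻ x, g x ∂μ := lintegral_const_mul' C g hC
      _ < ∞ := ENNReal.mul_lt_top hC.lt_top hg

theorem ae_pos_of_lintegral_inv_ofReal_ne_top {α : Type*} [MeasurableSpace α] {μ : Measure α}
    {f : α → ℝ} (hf : AEMeasurable f μ) (h : ∫⁻ x, (ENNReal.ofReal (f x))⁻¹ ∂μ ≠ ∞) :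
    ∀ᵐ x ∂μ, 0 < f x := by
  filter_upwards [ae_lt_top' (ENNReal.measurable_ofReal.comp_aemeasurable hf).inv h] with x hx
  exact ENNReal.ofReal_pos.1 (ENNReal.inv_lt_top.1 hx)

theorem closure_interior_Icc_pi {ι α : Type*} [Finite ι] [TopologicalSpace α] [LinearOrder α]
    [OrderTopology α] [DenselyOrdered α] {x y : ι → α} (h : ∀ i, x i ≠ y i) :
    closure (interior (Icc x y)) = Icc x y := by
  rw [← pi_univ_Icc, interior_pi_set finite_univ, closure_pi_set]
  simp_rw [closure_interior_Icc (h _)]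

theorem ContinuousOn.nonneg_of_ae_restrict_nonneg {X : Type*} [TopologicalSpace X]
    [MeasurableSpace X] {μ : Measure X} [μ.IsOpenPosMeasure] {s : Set X} {f : X → ℝ}
    (hf : ContinuousOn f s) (hs : s ⊆ closure (interior s)) (h : ∀ᵐ x ∂μ.restrict s, 0 ≤ f x) :
    ∀ x ∈ s, 0 ≤ f x := by
  have hmax : EqOn f (fun x => max (f x) 0) s :=
    Measure.eqOn_of_ae_eq (h.mono fun x hx => (max_eq_left hx).symm) hf
      (hf.sup continuousOn_const) hs
  exact fun x hx => (hmax hx).symm ▸ le_max_right _ _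

theorem integral_finiteness_equivalence_base_case_general (N : ℕ) (hN : 0 < N) (ε T : ℝ)
    (hεT : ε < T)
    (h₁ : (Fin N → ℝ) → ℝ) (θ : (Fin N → ℝ) → ℝ) (m₁ M₁ : ℝ)
    (hm : 0 < m₁) (hM : M₁ < 1)
    (hh : ∀ v ∈ Set.Icc (fun _ : Fin N => ε) (fun _ => T),
      m₁ ≤ h₁ v ∧ h₁ v ≤ M₁)
    (hhcont : ContinuousOn h₁ (Set.Icc (fun _ : Fin N => ε) (fun _ => T)))
    (hθcont : ContinuousOn θ (Set.Icc (fun _ : Fin N => ε) (fun _ => T))) :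
    (∫⁻ v in Set.Icc (fun _ : Fin N => ε) (fun _ => T),
        ∫⁻ t in Set.Icc ε T,
          (ENNReal.ofReal |t - v ⟨0, hN⟩|) ^ (-(θ v * h₁ v))) < ⊤ ↔
      ((∀ v ∈ Set.Icc (fun _ : Fin N => ε) (fun _ => T), θ v ≤ 1 / h₁ v) ∧
        (∫⁻ v in Set.Icc (fun _ : Fin N => ε) (fun _ => T),
          (ENNReal.ofReal (1 / h₁ v - θ v))⁻¹) < ⊤) := by
  set I := Icc (fun _ : Fin N => ε) (fun _ => T)
  have hpos : ∀ v ∈ I, 0 < h₁ v := fun v hv => hm.trans_le (hh v hv).1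
  have hle1 : ∀ v ∈ I, h₁ v ≤ 1 := fun v hv => (hh v hv).2.trans hM.le
  have hc : ∀ v ∈ I, v ⟨0, hN⟩ ∈ Icc ε T := fun v hv => ⟨hv.1 _, hv.2 _⟩
  obtain ⟨B, hB⟩ := isCompact_Icc.exists_bound_of_continuousOn hθcont
  have hexp : ∀ v ∈ I, 1 - θ v * h₁ v ≤ 1 + B := fun v hv => by
    have hθ : |θ v| ≤ B := by simpa using hB v hv
    nlinarith [neg_abs_le (θ v), abs_nonneg (θ v), hpos v hv, hle1 v hv]
  have hc₀ : 0 < min 1 (((T - ε) / 2) ^ (1 + B)) :=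
    lt_min one_pos (Real.rpow_pos_of_pos (by linarith) _)
  rw [lintegral_lt_top_iff_of_ae_le_mul (ENNReal.ofReal_pos.2 hc₀).ne' ENNReal.ofReal_ne_top
    (ae_restrict_of_forall_mem measurableSet_Icc fun v hv =>
      ofReal_mul_inv_ofReal_inv_sub_le_lintegral hεT (hc v hv) (hpos v hv) (hle1 v hv)
        (hexp v hv))
    (ae_restrict_of_forall_mem measurableSet_Icc fun v hv =>
      lintegral_le_ofReal_mul_inv_ofReal_inv_sub (hc v hv) hm (hh v hv).1 (hexp v hv))]
  refine ⟨fun hH => ⟨fun v hv => ?_, hH⟩, And.right⟩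
  have hg : ContinuousOn (fun v => 1 / h₁ v - θ v) I :=
    (continuousOn_const.div hhcont fun v hv => (hpos v hv).ne').sub hθcont
  have hae := ae_pos_of_lintegral_inv_ofReal_ne_top (hg.aemeasurable measurableSet_Icc) hH.ne
  exact sub_nonneg.1 <| hg.nonneg_of_ae_restrict_nonneg
    (closure_interior_Icc_pi fun _ => hεT.ne).symm.subset (hae.mono fun _ => le_of_lt) v hv

/-- Step 1 (one time-variable coordinate) of the induction proving the
integral-finiteness equivalence used for Theorem 2.1. All integrals are Lebesgue
integrals with values in `[0,∞]`; the conventions `0^{-a} = ∞` (`a > 0`) and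
`0⁻¹ = ∞` are realized by `ENNReal` arithmetic. -/
theorem integral_finiteness_equivalence_base_case (N : ℕ) (hN : 0 < N) (ε T : ℝ)
    (hε : 0 < ε) (hεT : ε < T)
    (h₁ : (Fin N → ℝ) → ℝ) (θ : (Fin N → ℝ) → ℝ) (m₁ M₁ : ℝ)
    (hm : 0 < m₁) (hM : M₁ < 1)
    (hh : ∀ v ∈ Set.Icc (fun _ : Fin N => ε) (fun _ => T),
      m₁ ≤ h₁ v ∧ h₁ v ≤ M₁)
    (hhcont : ContinuousOn h₁ (Set.Icc (fun _ : Fin N => ε) (fun _ => T)))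
    (hθcont : ContinuousOn θ (Set.Icc (fun _ : Fin N => ε) (fun _ => T))) :
    (∫⁻ v in Set.Icc (fun _ : Fin N => ε) (fun _ => T),
        ∫⁻ t in Set.Icc ε T,
          (ENNReal.ofReal |t - v ⟨0, hN⟩|) ^ (-(θ v * h₁ v))) < ⊤ ↔
      ((∀ v ∈ Set.Icc (fun _ : Fin N => ε) (fun _ => T), θ v ≤ 1 / h₁ v) ∧
        (∫⁻ v in Set.Icc (fun _ : Fin N => ε) (fun _ => T),
          (ENNReal.ofReal (1 / h₁ v - θ v))⁻¹) < ⊤) :=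
  integral_finiteness_equivalence_base_case_general N hN ε T hεT h₁ θ m₁ M₁ hm hM hh hhcont hθcont
end
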